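/- arXiv:2207.13557 — 5 statements merged into one kernel-verified Lean document; each statement's English description precedes it below -/
import Mathlib

section
/- Let M ≥ 2 be an integer, set α = 1/(M+1), and for a binary sequence (x_i)_{i≥1} with x = Σ_{i≥1} x_i 2^{−i} define g(x) = Σ_{i=1}^∞ x_i · M^(Σ_{j=1}^{i-1} x_j) · (M+1)^(−i) (this is well-defined, i.e., independent of the choice of binary expansion of x). Then g satisfies the Salem functional equations: g(x) = α·g(2x) for 0 ≤ x < 1/2, and g(x) = (1−α)·g(2x−1) + α for 1/2 ≤ x ≤ 1. -/
open Finset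

namespace Stmt6

noncomputable def V (x : ℕ → ℕ) : ℝ := ∑' i : ℕ, (x (i+1) : ℝ) / 2 ^ (i+1)

noncomputable def S (M : ℕ) (x : ℕ → ℕ) : ℝ :=
  ∑' i : ℕ, (x (i+1) : ℝ) * (M:ℝ) ^ (∑ j ∈ Finset.range i, x (j+1)) * ((M:ℝ)+1)⁻¹ ^ (i+1)

def Bin (x : ℕ → ℕ) : Prop := ∀ i, x i ≤ 1

lemma vterm_nonneg (x : ℕ → ℕ) (i : ℕ) : 0 ≤ (x (i+1) : ℝ) / 2 ^ (i+1) := by positivity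

lemma vterm_le {x : ℕ → ℕ} (hx : Bin x) (i : ℕ) :
    (x (i+1) : ℝ) / 2 ^ (i+1) ≤ (1/2 : ℝ) ^ (i+1) := by
  rw [div_pow, one_pow]
  apply div_le_div_of_nonneg_right ?_ (by positivity)
  exact_mod_cast hx (i+1)

lemma summable_V {x : ℕ → ℕ} (hx : Bin x) :
    Summable (fun i : ℕ => (x (i+1) : ℝ) / 2 ^ (i+1)) := by
  apply Summable.of_nonneg_of_le (vterm_nonneg x) (vterm_le hx)
  exact (summable_nat_add_iff 1).2
    (summable_geometric_of_lt_one (by norm_num) (by norm_num : (1/2:ℝ) < 1))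

noncomputable def st (M : ℕ) (x : ℕ → ℕ) (i : ℕ) : ℝ :=
  (x (i+1) : ℝ) * (M:ℝ) ^ (∑ j ∈ Finset.range i, x (j+1)) * ((M:ℝ)+1)⁻¹ ^ (i+1)

lemma S_eq (M : ℕ) (x : ℕ → ℕ) : S M x = ∑' i : ℕ, st M x i := rfl

lemma st_nonneg (M : ℕ) (x : ℕ → ℕ) (i : ℕ) : 0 ≤ st M x i := by
  unfold st; positivity

lemma sigma_le {x : ℕ → ℕ} (hx : Bin x) (i : ℕ) : (∑ j ∈ range i, x (j+1)) ≤ i := by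
  calc ∑ j ∈ range i, x (j+1) ≤ ∑ _j ∈ range i, 1 := Finset.sum_le_sum (fun j _ => hx (j+1))
  _ = i := by simp

lemma st_le {M : ℕ} (hM : 1 ≤ M) {x : ℕ → ℕ} (hx : Bin x) (i : ℕ) :
    st M x i ≤ ((M:ℝ)+1)⁻¹ * ((M:ℝ) * ((M:ℝ)+1)⁻¹) ^ i := by
  have h1 : ((x (i+1)):ℝ) ≤ 1 := by exact_mod_cast hx (i+1)
  have h2 : ((M:ℝ))^(∑ j ∈ range i, x (j+1)) ≤ (M:ℝ)^i :=
    pow_le_pow_right₀ (by exact_mod_cast hM) (sigma_le hx i)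
  have h3 : (0:ℝ) < ((M:ℝ)+1)⁻¹ := by positivity
  have : st M x i ≤ 1 * (M:ℝ)^i * ((M:ℝ)+1)⁻¹ ^ (i+1) := by
    unfold st
    gcongr
  refine this.trans_eq ?_
  rw [one_mul, mul_pow, pow_succ]
  ring

lemma ratio_lt_one {M : ℕ} : (M:ℝ) * ((M:ℝ)+1)⁻¹ < 1 := by
  rw [← div_eq_mul_inv, div_lt_one (by positivity)]
  linarith

lemma summable_S {M : ℕ} (hM : 1 ≤ M) {x : ℕ → ℕ} (hx : Bin x) :
    Summable (st M x) := by
  apply Summable.of_nonneg_of_le (st_nonneg M x) (st_le hM hx)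
  exact (summable_geometric_of_lt_one (by positivity) ratio_lt_one).mul_left _


lemma geoV (k : ℕ) : ∑' i:ℕ, (1:ℝ)/2^(i+(k+1)+1) = 1/2^(k+1) := by
  have h : ∀ i:ℕ, (1:ℝ)/2^(i+(k+1)+1) = (1/2:ℝ)^(k+2) * (1/2)^i := by
    intro i
    have e : i+(k+1)+1 = (k+2)+i := by omega
    rw [e, pow_add, div_pow, div_pow, one_pow, one_pow, div_mul_div_comm, one_mul]
  rw [tsum_congr h, tsum_mul_left,
    tsum_geometric_of_lt_one (by norm_num) (by norm_num : (1/2:ℝ) < 1)]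
  rw [div_pow, one_pow]
  norm_num
  rw [pow_succ]
  ring

lemma one_sub_ratio (M : ℕ) : 1 - (M:ℝ) * ((M:ℝ)+1)⁻¹ = ((M:ℝ)+1)⁻¹ := by
  have : ((M:ℝ)+1) ≠ 0 := by positivity
  field_simp
  ring

lemma geoS (M : ℕ) (s k : ℕ) :
    ∑' i:ℕ, (M:ℝ)^(s+i) * ((M:ℝ)+1)⁻¹^(i+(k+1)+1) = (M:ℝ)^s * ((M:ℝ)+1)⁻¹^(k+1) := by
  have hne : ((M:ℝ)+1) ≠ 0 := by positivity
  have h : ∀ i:ℕ, (M:ℝ)^(s+i) * ((M:ℝ)+1)⁻¹^(i+(k+1)+1)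
      = ((M:ℝ)^s * ((M:ℝ)+1)⁻¹^(k+2)) * ((M:ℝ) * ((M:ℝ)+1)⁻¹)^i := by
    intro i
    rw [pow_add, mul_pow]
    have : i+(k+1)+1 = i + (k+2) := by omega
    rw [this, pow_add]
    ring
  rw [tsum_congr h, tsum_mul_left,
    tsum_geometric_of_lt_one (by positivity) ratio_lt_one, one_sub_ratio, inv_inv]
  rw [pow_succ ((M:ℝ)+1)⁻¹ (k+1)]
  field_simp


lemma key_aux {M : ℕ} (hM : 2 ≤ M) {x y : ℕ → ℕ} (hx : Bin x) (hy : Bin y) (k : ℕ)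
    (hlt : ∀ j, j < k → x (j+1) = y (j+1)) (hxk : x (k+1) = 1) (hyk : y (k+1) = 0)
    (hxy : V x = V y) : S M x = S M y := by
  have hM1 : 1 ≤ M := by omega
  set f : ℕ → ℝ := fun i => (x (i+1) : ℝ) / 2 ^ (i+1) with hf
  set g : ℕ → ℝ := fun i => (y (i+1) : ℝ) / 2 ^ (i+1) with hg
  have hfs : Summable f := summable_V hx
  have hgs : Summable g := summable_V hy
  have hfs' : Summable (fun i => f (i+(k+1))) := (summable_nat_add_iff (k+1)).2 hfs
  have hgs' : Summable (fun i => g (i+(k+1))) := (summable_nat_add_iff (k+1)).2 hgs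
  have hbs : Summable (fun i : ℕ => (1:ℝ)/2^(i+(k+1)+1)) := by
    apply Summable.of_nonneg_of_le (fun i => by positivity)
      (fun i => le_of_eq ?_) ((summable_geometric_of_lt_one (by norm_num)
        (by norm_num : (1/2:ℝ) < 1)).mul_left ((1/2:ℝ)^(k+2)))
    have e : i+(k+1)+1 = (k+2)+i := by omega
    rw [e, pow_add, div_pow, div_pow, one_pow, one_pow, div_mul_div_comm, one_mul]
  -- split the V sums
  have hsx := Summable.sum_add_tsum_nat_add (k+1) hfs
  have hsy := Summable.sum_add_tsum_nat_add (k+1) hgs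
  have hpre : ∑ i ∈ range k, f i = ∑ i ∈ range k, g i :=
    Finset.sum_congr rfl (fun j hj => by
      simp only [hf, hg, hlt j (Finset.mem_range.1 hj)])
  have hfk : f k = 1/2^(k+1) := by simp [hf, hxk]
  have hgk : g k = 0 := by simp [hg, hyk]
  have hVfx : (∑' i, f i) = V x := rfl
  have hVgy : (∑' i, g i) = V y := rfl
  have hT : 1/2^(k+1) + (∑' i, f (i+(k+1))) = ∑' i, g (i+(k+1)) := by
    rw [Finset.sum_range_succ, hfk] at hsx
    rw [Finset.sum_range_succ, hgk] at hsy
    linarith [hpre, hsx, hsy, hxy, hVfx, hVgy]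
  have hTgle : (∑' i, g (i+(k+1))) ≤ 1/2^(k+1) := by
    rw [← geoV k]
    apply Summable.tsum_le_tsum ?_ hgs' hbs
    intro i
    simp only [hg]
    apply div_le_div_of_nonneg_right ?_ (by positivity)
    exact_mod_cast hy (i+(k+1)+1)
  have hTf0 : (∑' i, f (i+(k+1))) = 0 := by
    have h0 : 0 ≤ ∑' i, f (i+(k+1)) := tsum_nonneg (fun i => vterm_nonneg x _)
    linarith
  have hx0 : ∀ i : ℕ, x (i+(k+1)+1) = 0 := by
    intro i
    have h1 : f (i+(k+1)) ≤ 0 := by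
      rw [← hTf0]
      exact Summable.le_tsum hfs' i (fun j _ => vterm_nonneg x _)
    have h2 : (0:ℝ) ≤ f (i+(k+1)) := vterm_nonneg x _
    have h3 : f (i+(k+1)) = 0 := le_antisymm h1 h2
    simp only [hf, div_eq_zero_iff] at h3
    rcases h3 with h3 | h3
    · exact_mod_cast h3
    · exact absurd h3 (by positivity)
  have hy1 : ∀ i : ℕ, y (i+(k+1)+1) = 1 := by
    intro i
    have hTg : (∑' i, g (i+(k+1))) = 1/2^(k+1) := by linarith
    have hsub : Summable (fun i : ℕ => (1:ℝ)/2^(i+(k+1)+1) - g (i+(k+1))) := hbs.sub hgs'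
    have htsub : ∑' i, ((1:ℝ)/2^(i+(k+1)+1) - g (i+(k+1))) = 0 := by
      rw [Summable.tsum_sub hbs hgs', geoV k, hTg, sub_self]
    have hterm : (1:ℝ)/2^(i+(k+1)+1) - g (i+(k+1)) ≤ 0 := by
      rw [← htsub]
      apply Summable.le_tsum hsub i
      intro j _
      simp only [hg, sub_nonneg]
      apply div_le_div_of_nonneg_right ?_ (by positivity)
      exact_mod_cast hy (j+(k+1)+1)
    have h2 : g (i+(k+1)) ≤ 1/2^(i+(k+1)+1) := by
      simp only [hg]
      apply div_le_div_of_nonneg_right ?_ (by positivity)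
      exact_mod_cast hy (i+(k+1)+1)
    have h3 : g (i+(k+1)) = 1/2^(i+(k+1)+1) := by linarith
    simp only [hg] at h3
    have : (y (i+(k+1)+1) : ℝ) = 1 := by
      have hp : (2:ℝ)^(i+(k+1)+1) ≠ 0 := by positivity
      calc (y (i+(k+1)+1) : ℝ) = ((y (i+(k+1)+1) : ℝ)/2^(i+(k+1)+1))*2^(i+(k+1)+1) := by
            field_simp
        _ = ((1:ℝ)/2^(i+(k+1)+1))*2^(i+(k+1)+1) := by rw [h3]
        _ = 1 := by field_simp
    exact_mod_cast this
  -- now compute the S sums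
  have hssx := Summable.sum_add_tsum_nat_add (k+1) (summable_S hM1 hx)
  have hssy := Summable.sum_add_tsum_nat_add (k+1) (summable_S hM1 hy)
  set s := ∑ j ∈ range k, x (j+1) with hs
  have hsigma : ∑ j ∈ range k, y (j+1) = s := by
    rw [hs]
    exact (Finset.sum_congr rfl (fun j hj => (hlt j (Finset.mem_range.1 hj)).symm))
  have hpreS : ∑ i ∈ range k, st M x i = ∑ i ∈ range k, st M y i := by
    apply Finset.sum_congr rfl
    intro i hi
    have hi' := Finset.mem_range.1 hi
    unfold st
    rw [hlt i hi', Finset.sum_congr rfl (fun j hj => hlt j (lt_trans (Finset.mem_range.1 hj) hi'))]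
  have hstxk : st M x k = (M:ℝ)^s * ((M:ℝ)+1)⁻¹^(k+1) := by
    unfold st
    rw [hxk, ← hs]
    simp
  have hstyk : st M y k = 0 := by unfold st; rw [hyk]; simp
  have htailx : (∑' i, st M x (i+(k+1))) = 0 := by
    rw [tsum_congr (fun i => ?_), tsum_zero]
    unfold st
    rw [hx0 i]
    simp
  have htaily : (∑' i, st M y (i+(k+1))) = (M:ℝ)^s * ((M:ℝ)+1)⁻¹^(k+1) := by
    rw [tsum_congr (fun i => ?_), geoS M s k]
    unfold st
    have hsig : ∑ j ∈ range (i+(k+1)), y (j+1) = s + i := by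
      have e : i+(k+1) = (k+1)+i := by omega
      rw [e, Finset.sum_range_add, Finset.sum_range_succ, hsigma, hyk]
      have : ∀ j ∈ range i, y ((k+1)+j+1) = 1 := by
        intro j _
        have e2 : (k+1)+j+1 = j+(k+1)+1 := by omega
        rw [e2, hy1 j]
      rw [Finset.sum_congr rfl this]
      simp
    rw [hsig, hy1 i]
    simp
  rw [S_eq, S_eq, ← hssx, ← hssy, Finset.sum_range_succ, Finset.sum_range_succ,
    hstxk, hstyk, htailx, htaily, hpreS]
  ring


lemma key {M : ℕ} (hM : 2 ≤ M) {x y : ℕ → ℕ} (hx : Bin x) (hy : Bin y)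
    (hxy : V x = V y) : S M x = S M y := by
  by_cases h : ∀ i, x (i+1) = y (i+1)
  · apply tsum_congr
    intro i
    simp only [h]
  · push_neg at h
    classical
    set k := Nat.find h with hk
    have hkspec : x (k+1) ≠ y (k+1) := Nat.find_spec h
    have hlt : ∀ j, j < k → x (j+1) = y (j+1) := by
      intro j hj
      have hj' : j < Nat.find h := by rw [← hk]; exact hj
      exact not_not.1 (Nat.find_min h hj')
    have hx1 := hx (k+1)
    have hy1 := hy (k+1)
    rcases Nat.lt_or_ge (x (k+1)) (y (k+1)) with hc | hc
    · have hxk : x (k+1) = 0 := by omega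
      have hyk : y (k+1) = 1 := by omega
      exact (key_aux hM hy hx k (fun j hj => (hlt j hj).symm) hyk hxk hxy.symm).symm
    · have hxk : x (k+1) = 1 := by omega
      have hyk : y (k+1) = 0 := by omega
      exact key_aux hM hx hy k hlt hxk hyk hxy

/-- binary digits of `r ∈ [0,1)` -/
noncomputable def dig (r : ℝ) : ℕ → ℕ
  | 0 => 0
  | (j+1) => (⌊r * 2^(j+1)⌋ - 2 * ⌊r * 2^j⌋).toNat

lemma dig_int {r : ℝ} (j : ℕ) :
    0 ≤ ⌊r * 2^(j+1)⌋ - 2 * ⌊r * 2^j⌋ ∧ ⌊r * 2^(j+1)⌋ - 2 * ⌊r * 2^j⌋ ≤ 1 := by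
  set a := r * 2^j with ha
  have h2a : r * 2^(j+1) = 2 * a := by rw [ha]; ring
  rw [h2a]
  constructor
  · have h1 : (2 * ⌊a⌋ : ℝ) ≤ 2 * a := by
      have := Int.floor_le a
      linarith
    have := Int.le_floor.2 (by exact_mod_cast h1)
    omega
  · have h1 : 2 * a < 2 * ⌊a⌋ + 2 := by
      have := Int.lt_floor_add_one a
      linarith
    have : ⌊2 * a⌋ < 2 * ⌊a⌋ + 2 := by
      apply Int.floor_lt.2
      push_cast
      linarith
    omega

lemma dig_bin (r : ℝ) : Bin (dig r) := by
  intro i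
  cases i with
  | zero => simp [dig]
  | succ j =>
    have := dig_int (r := r) j
    simp only [dig]
    omega

lemma dig_partial {r : ℝ} (h0 : 0 ≤ r) (h1 : r < 1) (n : ℕ) :
    ∑ i ∈ range n, (dig r (i+1) : ℝ) / 2 ^ (i+1) = (⌊r * 2^n⌋ : ℝ) / 2^n := by
  induction n with
  | zero =>
    have h : ⌊r⌋ = 0 := Int.floor_eq_zero_iff.2 ⟨h0, h1⟩
    simp [h]
  | succ n ih =>
    rw [Finset.sum_range_succ, ih]
    have hd := dig_int (r := r) n
    have hcast : ((dig r (n+1) : ℝ)) = (⌊r * 2^(n+1)⌋ : ℝ) - 2 * (⌊r * 2^n⌋ : ℝ) := by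
      simp only [dig]
      have e : r * 2^(n+1) = r * 2^n * 2 := by ring
      have h1' : 0 ≤ ⌊r * 2^n * 2⌋ - 2 * ⌊r * 2^n⌋ := by
        rw [e] at hd
        omega
      rw [e, ← Int.cast_natCast (R := ℝ), Int.toNat_of_nonneg h1']
      push_cast
      ring
    rw [hcast]
    have h2 : (2:ℝ)^(n+1) ≠ 0 := by positivity
    field_simp
    ring

lemma exists_expansion {r : ℝ} (h0 : 0 ≤ r) (h1 : r ≤ 1) : ∃ x, Bin x ∧ V x = r := by
  rcases eq_or_lt_of_le h1 with h1 | h1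
  · refine ⟨fun _ => 1, fun i => le_refl 1, ?_⟩
    have : ∀ i : ℕ, ((1:ℕ) : ℝ) / 2 ^ (i+1) = (1/2:ℝ) * (1/2)^i := by
      intro i
      rw [pow_succ]
      push_cast
      ring_nf
      norm_num
    subst h1
    rw [V, tsum_congr this, tsum_mul_left,
      tsum_geometric_of_lt_one (by norm_num) (by norm_num : (1/2:ℝ) < 1)]
    norm_num
  · refine ⟨dig r, dig_bin r, ?_⟩
    have hb := dig_bin r
    have hsum := summable_V hb
    have htend := hsum.hasSum.tendsto_sum_nat
    have htend2 : Filter.Tendsto (fun n => ∑ i ∈ range n, (dig r (i+1) : ℝ) / 2 ^ (i+1))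
        Filter.atTop (nhds r) := by
      have heq : (fun n => ∑ i ∈ range n, (dig r (i+1) : ℝ) / 2 ^ (i+1))
          = fun n => (⌊r * 2^n⌋ : ℝ) / 2^n := funext (dig_partial h0 h1)
      rw [heq]
      apply tendsto_of_tendsto_of_tendsto_of_le_of_le
        (g := fun n : ℕ => r - (1/2:ℝ)^n) (h := fun _ : ℕ => r)
      · have : Filter.Tendsto (fun n : ℕ => (1/2:ℝ)^n) Filter.atTop (nhds 0) :=
          tendsto_pow_atTop_nhds_zero_of_lt_one (by norm_num) (by norm_num)
        have := Filter.Tendsto.const_sub r this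
        simpa using this
      · exact tendsto_const_nhds
      · intro n
        have hp : (0:ℝ) < 2^n := by positivity
        have hlf := Int.lt_floor_add_one (r * 2^n)
        show r - (1/2:ℝ)^n ≤ (⌊r * 2^n⌋ : ℝ)/2^n
        rw [div_pow, one_pow, sub_le_iff_le_add, ← add_div, le_div_iff₀ hp]
        linarith
      · intro n
        have hp : (0:ℝ) < 2^n := by positivity
        have hfl := Int.floor_le (r * 2^n)
        show (⌊r * 2^n⌋ : ℝ)/2^n ≤ r
        rw [div_le_iff₀ hp]
        linarith
    exact tendsto_nhds_unique htend htend2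


def cons (b : ℕ) (e : ℕ → ℕ) : ℕ → ℕ
  | 0 => 0
  | 1 => b
  | (j+2) => e (j+1)

lemma cons_bin {b : ℕ} (hb : b ≤ 1) {e : ℕ → ℕ} (he : Bin e) : Bin (cons b e) := by
  intro i
  match i with
  | 0 => simp [cons]
  | 1 => simpa [cons] using hb
  | (j+2) => simpa [cons] using he (j+1)

lemma consV {b : ℕ} (hb : b ≤ 1) {e : ℕ → ℕ} (he : Bin e) :
    V (cons b e) = ((b:ℝ) + V e) / 2 := by
  have hbin := cons_bin hb he
  have hsum := summable_V hbin
  rw [V, Summable.tsum_eq_zero_add hsum]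
  have h0 : ((cons b e (0+1) : ℕ) : ℝ) / 2 ^ (0+1) = (b:ℝ)/2 := by
    simp [cons]
  have h1 : ∀ i : ℕ, ((cons b e (i+1+1) : ℕ) : ℝ) / 2 ^ (i+1+1)
      = (1/2 : ℝ) * ((e (i+1) : ℝ) / 2 ^ (i+1)) := by
    intro i
    have : cons b e (i+2) = e (i+1) := rfl
    rw [show i+1+1 = i+2 from rfl, this, pow_succ]
    ring
  rw [h0, tsum_congr h1, tsum_mul_left]
  rw [V]
  ring

lemma consS {M : ℕ} (hM : 2 ≤ M) {b : ℕ} (hb : b ≤ 1) {e : ℕ → ℕ} (he : Bin e) :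
    S M (cons b e) = ((M:ℝ)+1)⁻¹ * ((b:ℝ) + (M:ℝ)^b * S M e) := by
  have hM1 : 1 ≤ M := by omega
  have hbin := cons_bin hb he
  rw [S_eq, Summable.tsum_eq_zero_add (summable_S hM1 hbin)]
  have h0 : st M (cons b e) 0 = (b:ℝ) * ((M:ℝ)+1)⁻¹ := by
    unfold st
    simp [cons]
  have h1 : ∀ i : ℕ, st M (cons b e) (i+1)
      = (((M:ℝ)+1)⁻¹ * (M:ℝ)^b) * st M e i := by
    intro i
    unfold st
    have hc2 : ∀ j : ℕ, cons b e (j+2) = e (j+1) := fun j => rfl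
    have hc1 : cons b e 1 = b := rfl
    have hσ : ∑ j ∈ range (i+1), cons b e (j+1) = (∑ j ∈ range i, e (j+1)) + b := by
      rw [Finset.sum_range_succ']
      congr 1
    rw [show i+1+1 = i+2 from rfl, hc2 i, hσ, pow_add]
    rw [pow_succ ((M:ℝ)+1)⁻¹ (i+1)]
    ring
  rw [h0, tsum_congr h1, tsum_mul_left, ← S_eq]
  ring

open Classical in
noncomputable def gfun (M : ℕ) : ℝ → ℝ := fun r =>
  if h : ∃ x, Bin x ∧ V x = r then S M h.choose else 0

lemma g_spec {M : ℕ} (hM : 2 ≤ M) {d : ℕ → ℕ} (hd : Bin d) : gfun M (V d) = S M d := by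
  have hex : ∃ x, Bin x ∧ V x = V d := ⟨d, hd, rfl⟩
  simp only [gfun]
  rw [dif_pos hex]
  exact key hM hex.choose_spec.1 hd hex.choose_spec.2

end Stmt6

open Stmt6 in
/-- The function `g` defined on binary expansions by
`g(Σ x_i 2^{-i}) = Σ x_i M^{Σ_{j<i} x_j} (M+1)^{-i}` is well defined (there exists a
function of the real number agreeing with the formula on every binary expansion) and
satisfies Salem's functional equations with `α = 1/(M+1)`. -/
theorem stmt6 (M : ℕ) (hM : 2 ≤ M) :
    ∃ g : ℝ → ℝ,
      (∀ x : ℕ → ℕ, (∀ i, x i ≤ 1) →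
        g (∑' i : ℕ, (x (i + 1) : ℝ) / 2 ^ (i + 1)) =
          ∑' i : ℕ, (x (i + 1) : ℝ) * (M : ℝ) ^ (∑ j ∈ Finset.range i, x (j + 1)) *
            ((M : ℝ) + 1)⁻¹ ^ (i + 1)) ∧
      (∀ x : ℝ, 0 ≤ x → x < 1 / 2 → g x = (1 / ((M : ℝ) + 1)) * g (2 * x)) ∧
      (∀ x : ℝ, 1 / 2 ≤ x → x ≤ 1 →
        g x = (1 - 1 / ((M : ℝ) + 1)) * g (2 * x - 1) + 1 / ((M : ℝ) + 1)) := by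
  have hne : ((M:ℝ)+1) ≠ 0 := by positivity
  refine ⟨gfun M, ?_, ?_, ?_⟩
  · intro x hx
    exact g_spec hM hx
  · intro x h0 h1
    obtain ⟨e, he, hVe⟩ := exists_expansion (r := 2*x) (by linarith) (by linarith)
    have hbin : Bin (cons 0 e) := cons_bin (by norm_num) he
    have hV : V (cons 0 e) = x := by
      rw [consV (by norm_num) he, hVe]
      push_cast
      ring
    calc gfun M x = gfun M (V (cons 0 e)) := by rw [hV]
      _ = S M (cons 0 e) := g_spec hM hbin
      _ = ((M:ℝ)+1)⁻¹ * (((0:ℕ):ℝ) + (M:ℝ)^(0:ℕ) * S M e) := consS hM (by norm_num) he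
      _ = (1 / ((M : ℝ) + 1)) * gfun M (2 * x) := by
          rw [← hVe, g_spec hM he]
          push_cast
          rw [pow_zero, one_div]
          ring
  · intro x h0 h1
    obtain ⟨e, he, hVe⟩ := exists_expansion (r := 2*x-1) (by linarith) (by linarith)
    have hbin : Bin (cons 1 e) := cons_bin (by norm_num) he
    have hV : V (cons 1 e) = x := by
      rw [consV (by norm_num) he, hVe]
      push_cast
      ring
    calc gfun M x = gfun M (V (cons 1 e)) := by rw [hV]
      _ = S M (cons 1 e) := g_spec hM hbin
      _ = ((M:ℝ)+1)⁻¹ * (((1:ℕ):ℝ) + (M:ℝ)^(1:ℕ) * S M e) := consS hM (by norm_num) he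
      _ = (1 - 1 / ((M : ℝ) + 1)) * gfun M (2 * x - 1) + 1 / ((M : ℝ) + 1) := by
          rw [← hVe, g_spec hM he]
          push_cast
          rw [pow_one]
          field_simp
          ring
end

section
/- For α ∈ (0,1), the function g : [0,1] → [0,1] defined on binary expansions by g(Σ_{i≥1} x_i 2^{−i}) = Σ_{i=1}^∞ x_i · (1−α)^(Σ_{j=1}^{i-1} x_j) · α^(i − Σ_{j=1}^{i-1} x_j) is well-defined (agrees on the two binary expansions of dyadic rationals) and continuous on [0,1]. -/
open Finset Filter

namespace Stmt7

def shf (x : ℕ → ℕ) : ℕ → ℕ := fun n => x (n + 1)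

def A (x : ℕ → ℕ) (i : ℕ) : ℕ := ∑ j ∈ Finset.range i, x (j + 1)

lemma A_le {x : ℕ → ℕ} (hx : ∀ i, x i ≤ 1) (i : ℕ) : A x i ≤ i := by
  calc A x i ≤ ∑ _j ∈ Finset.range i, 1 := Finset.sum_le_sum fun j _ => hx _
  _ = i := by simp

noncomputable def term (α : ℝ) (x : ℕ → ℕ) (i : ℕ) : ℝ :=
  (x (i + 1) : ℝ) * (1 - α) ^ (A x i) * α ^ ((i + 1) - A x i)

noncomputable def S (α : ℝ) (x : ℕ → ℕ) : ℝ := ∑' i, term α x i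

variable {α : ℝ} (hα : α ∈ Set.Ioo (0 : ℝ) 1)
include hα

lemma term_nonneg (x : ℕ → ℕ) (i : ℕ) : 0 ≤ term α x i := by
  have h1 : (0:ℝ) ≤ 1 - α := by linarith [hα.2]
  have h2 : (0:ℝ) ≤ α := le_of_lt hα.1
  exact mul_nonneg (mul_nonneg (Nat.cast_nonneg _) (pow_nonneg h1 _)) (pow_nonneg h2 _)

lemma term_le {x : ℕ → ℕ} (hx : ∀ i, x i ≤ 1) (i : ℕ) :
    term α x i ≤ (max α (1 - α)) ^ (i + 1) := by
  have h1 : (0:ℝ) ≤ 1 - α := by linarith [hα.2]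
  have h2 : (0:ℝ) ≤ α := le_of_lt hα.1
  have hx1 : (x (i+1) : ℝ) ≤ 1 := by exact_mod_cast hx (i+1)
  have hA := A_le hx i
  calc term α x i ≤ 1 * ((1 - α) ^ (A x i) * α ^ ((i + 1) - A x i)) := by
        rw [term, mul_assoc]
        apply mul_le_mul_of_nonneg_right hx1 (by positivity)
    _ ≤ (max α (1-α)) ^ (A x i) * (max α (1-α)) ^ ((i + 1) - A x i) := by
        rw [one_mul]
        apply mul_le_mul (pow_le_pow_left₀ h1 (le_max_right _ _) _)
          (pow_le_pow_left₀ h2 (le_max_left _ _) _) (by positivity) (by positivity)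
    _ = (max α (1-α)) ^ (i + 1) := by
        rw [← pow_add]
        congr 1
        omega

lemma m_lt_one : max α (1 - α) < 1 := by
  apply max_lt hα.2; linarith [hα.1]

lemma m_nonneg : 0 ≤ max α (1 - α) := le_trans (le_of_lt hα.1) (le_max_left _ _)

lemma summable_term {x : ℕ → ℕ} (hx : ∀ i, x i ≤ 1) : Summable (term α x) := by
  apply Summable.of_nonneg_of_le (term_nonneg hα x) (term_le hα hx)
  have : Summable (fun i : ℕ => (max α (1-α)) ^ i) :=
    summable_geometric_of_lt_one (m_nonneg hα) (m_lt_one hα)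
  simpa [pow_succ, mul_comm] using this.mul_left (max α (1-α))

lemma S_nonneg (x : ℕ → ℕ) : 0 ≤ S α x := tsum_nonneg (term_nonneg hα x)

noncomputable def pf (α : ℝ) (x : ℕ → ℕ) (n : ℕ) : ℝ :=
  (1 - α) ^ (A x n) * α ^ (n - A x n)

lemma pf_nonneg (x : ℕ → ℕ) (n : ℕ) : 0 ≤ pf α x n := by
  have h1 : (0:ℝ) ≤ 1 - α := by linarith [hα.2]
  have h2 : (0:ℝ) ≤ α := le_of_lt hα.1
  exact mul_nonneg (pow_nonneg h1 _) (pow_nonneg h2 _)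

lemma term_le_pf {x : ℕ → ℕ} (hx : ∀ i, x i ≤ 1) (n : ℕ) :
    term α x n ≤ pf α x n - pf α x (n + 1) := by
  have h1 : (0:ℝ) ≤ 1 - α := by linarith [hα.2]
  have h2 : (0:ℝ) ≤ α := le_of_lt hα.1
  have hA := A_le hx n
  have hAsucc : A x (n + 1) = A x n + x (n + 1) := Finset.sum_range_succ _ _
  have hxb := hx (n + 1)
  interval_cases h : x (n + 1)
  · have ht : term α x n = 0 := by simp [term, h]
    have hA1 : A x (n + 1) = A x n := by omega
    have e1 : (n + 1) - A x n = (n - A x n) + 1 := by omega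
    have e : pf α x (n + 1) = pf α x n * α := by
      rw [pf, pf, hA1, e1, pow_succ]; ring
    rw [ht, e]
    nlinarith [pf_nonneg hα x n, hα.2]
  · have hA1 : A x (n + 1) = A x n + 1 := by omega
    have e1 : (n + 1) - A x n = (n - A x n) + 1 := by omega
    have e2 : (n + 1) - (A x n + 1) = n - A x n := by omega
    refine le_of_eq ?_
    rw [term, h, pf, pf, hA1, e1, e2, pow_succ (1 - α), pow_succ α]
    push_cast; ring

lemma S_le_one {x : ℕ → ℕ} (hx : ∀ i, x i ≤ 1) : S α x ≤ 1 := by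
  apply Real.tsum_le_of_sum_range_le (term_nonneg hα x)
  intro n
  calc ∑ i ∈ Finset.range n, term α x i
      ≤ ∑ i ∈ Finset.range n, (pf α x i - pf α x (i + 1)) :=
        Finset.sum_le_sum fun i _ => term_le_pf hα hx i
    _ = pf α x 0 - pf α x n := Finset.sum_range_sub' _ _
    _ ≤ 1 := by
        have h0 : pf α x 0 = 1 := by simp [pf, A]
        rw [h0]
        linarith [pf_nonneg hα x n]



omit hα in
lemma shf_le {x : ℕ → ℕ} (hx : ∀ i, x i ≤ 1) : ∀ i, shf x i ≤ 1 := fun i => hx (i + 1)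

omit hα in
lemma A_shf (x : ℕ → ℕ) (i : ℕ) : A x (i + 1) = x 1 + A (shf x) i := by
  rw [A, Finset.sum_range_succ', A]
  simp [shf]
  rw [add_comm]

lemma S_rec {x : ℕ → ℕ} (hx : ∀ i, x i ≤ 1) :
    S α x = if x 1 = 0 then α * S α (shf x) else α + (1 - α) * S α (shf x) := by
  have hsum := summable_term hα hx
  have hsum' := summable_term hα (shf_le hx)
  have h0 : term α x 0 = (x 1 : ℝ) * α := by simp [term, A]
  have key : ∀ i : ℕ, term α x (i + 1) =
      (if x 1 = 0 then α else 1 - α) * term α (shf x) i := by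
    intro i
    have hB := A_le (shf_le hx) i
    have hx1 := hx 1
    rcases Nat.le_one_iff_eq_zero_or_eq_one.mp hx1 with h | h
    · have e : (i + 2) - A (shf x) i = ((i + 1) - A (shf x) i) + 1 := by omega
      simp only [term, A_shf, h, if_pos, Nat.zero_add, shf]
      rw [show i + 1 + 1 = i + 2 from rfl, e, pow_succ]
      ring
    · have e : (i + 2) - (1 + A (shf x) i) = (i + 1) - A (shf x) i := by omega
      simp only [term, A_shf, h, shf, if_neg one_ne_zero]
      rw [show i + 1 + 1 = i + 2 from rfl, e, pow_add, pow_one]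
      ring
  rw [S, Summable.tsum_eq_zero_add hsum, h0]
  have : ∑' i, term α x (i + 1) = (if x 1 = 0 then α else 1 - α) * S α (shf x) := by
    rw [S, ← tsum_mul_left]
    exact tsum_congr key
  rw [this]
  rcases Nat.le_one_iff_eq_zero_or_eq_one.mp (hx 1) with h | h <;> simp [h]

noncomputable def rsum (x : ℕ → ℕ) : ℝ := ∑' i : ℕ, (x (i + 1) : ℝ) / 2 ^ (i + 1)

omit hα in
lemma summable_half : Summable (fun i : ℕ => (1/2 : ℝ) ^ (i + 1)) := by
  have : Summable (fun i : ℕ => (1/2 : ℝ) ^ i) :=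
    summable_geometric_of_lt_one (by norm_num) (by norm_num)
  simpa [pow_succ, mul_comm] using this.mul_left (1/2 : ℝ)

omit hα in
lemma rterm_le {x : ℕ → ℕ} (hx : ∀ i, x i ≤ 1) (i : ℕ) :
    (x (i + 1) : ℝ) / 2 ^ (i + 1) ≤ (1/2 : ℝ) ^ (i + 1) := by
  rw [div_pow, one_pow]
  gcongr
  exact_mod_cast hx (i + 1)

omit hα in
lemma summable_rsum {x : ℕ → ℕ} (hx : ∀ i, x i ≤ 1) :
    Summable (fun i : ℕ => (x (i + 1) : ℝ) / 2 ^ (i + 1)) :=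
  Summable.of_nonneg_of_le (fun i => by positivity) (rterm_le hx) summable_half

omit hα in
lemma rsum_nonneg (x : ℕ → ℕ) : 0 ≤ rsum x := tsum_nonneg fun i => by positivity

omit hα in
lemma rsum_le_one {x : ℕ → ℕ} (hx : ∀ i, x i ≤ 1) : rsum x ≤ 1 := by
  have h1 : rsum x ≤ ∑' i : ℕ, (1/2 : ℝ) ^ (i + 1) :=
    Summable.tsum_le_tsum (rterm_le hx) (summable_rsum hx) summable_half
  have h2 : ∑' i : ℕ, (1/2 : ℝ) ^ (i + 1) = 1 := by
    have hg : ∑' i : ℕ, (1/2 : ℝ) ^ i = 2 := by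
      rw [tsum_geometric_of_lt_one (by norm_num) (by norm_num)]; norm_num
    have : (fun i : ℕ => (1/2 : ℝ) ^ (i + 1)) = fun i : ℕ => (1/2) * (1/2 : ℝ) ^ i :=
      funext fun i => by rw [pow_succ]; ring
    rw [this, tsum_mul_left, hg]; norm_num
  linarith

omit hα in
lemma rsum_rec {x : ℕ → ℕ} (hx : ∀ i, x i ≤ 1) :
    rsum x = (x 1 : ℝ) / 2 + rsum (shf x) / 2 := by
  have hsum := summable_rsum hx
  rw [rsum, Summable.tsum_eq_zero_add hsum]
  congr 1
  · norm_num
  · rw [rsum, ← tsum_div_const]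
    apply tsum_congr
    intro i
    rw [shf]
    rw [show i + 1 + 1 = i + 2 from rfl]
    rw [pow_succ]
    ring



open BoundedContinuousFunction

noncomputable def Tf (α : ℝ) (f : ℝ → ℝ) : ℝ → ℝ :=
  fun x => if x ≤ 1/2 then α * f (2*x) else α + (1-α) * f (2*x - 1)

def Xset : Set (ℝ →ᵇ ℝ) :=
  {f | f 0 = 0 ∧ f 1 = 1 ∧ ∀ x, f x ∈ Set.Icc (0:ℝ) 1}

include hα in
lemma Tf_cont {f : ℝ →ᵇ ℝ} (hf : f ∈ Xset) : Continuous (Tf α f) := by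
  apply Continuous.if_le
  · exact (continuous_const.mul (f.continuous.comp (by continuity)))
  · exact (continuous_const.add (continuous_const.mul (f.continuous.comp (by continuity))))
  · exact continuous_id
  · exact continuous_const
  · intro x hx
    rw [hx]
    norm_num [hf.1, hf.2.1]

include hα in
lemma Tf_mem_Icc {f : ℝ →ᵇ ℝ} (hf : f ∈ Xset) (x : ℝ) : Tf α f x ∈ Set.Icc (0:ℝ) 1 := by
  obtain ⟨h0, h1, hIcc⟩ := hf
  rw [Tf]
  split
  · obtain ⟨ha, hb⟩ := hIcc (2*x)
    constructor
    · nlinarith [hα.1]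
    · nlinarith [hα.1, hα.2]
  · obtain ⟨ha, hb⟩ := hIcc (2*x - 1)
    constructor
    · nlinarith [hα.1, hα.2]
    · nlinarith [hα.1, hα.2]

noncomputable def TX (α : ℝ) (hα : α ∈ Set.Ioo (0 : ℝ) 1) (f : ↥(Xset)) : ↥Xset :=
  ⟨⟨⟨Tf α f.1, Tf_cont hα f.2⟩,
    ⟨1, fun x y => Real.dist_le_of_mem_Icc_01 (Tf_mem_Icc hα f.2 x) (Tf_mem_Icc hα f.2 y)⟩⟩,
    by
      refine ⟨?_, ?_, fun x => Tf_mem_Icc hα f.2 x⟩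
      · show Tf α f.1 0 = 0
        rw [Tf]
        norm_num [f.2.1]
      · show Tf α f.1 1 = 1
        rw [Tf]
        norm_num [f.2.2.1]⟩

omit hα in
lemma isClosed_Xset : IsClosed (Xset) := by
  have h1 : IsClosed {f : ℝ →ᵇ ℝ | f 0 = 0} :=
    isClosed_eq (continuous_eval_const (F := ℝ →ᵇ ℝ) (0:ℝ)) continuous_const
  have h2 : IsClosed {f : ℝ →ᵇ ℝ | f 1 = 1} :=
    isClosed_eq (continuous_eval_const (F := ℝ →ᵇ ℝ) (1:ℝ)) continuous_const
  have h3 : IsClosed {f : ℝ →ᵇ ℝ | ∀ x, f x ∈ Set.Icc (0:ℝ) 1} := by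
    rw [Set.setOf_forall]
    exact isClosed_iInter fun x =>
      IsClosed.preimage (continuous_eval_const (F := ℝ →ᵇ ℝ) x) isClosed_Icc
  have he : Xset = {f : ℝ →ᵇ ℝ | f 0 = 0} ∩
      ({f : ℝ →ᵇ ℝ | f 1 = 1} ∩ {f : ℝ →ᵇ ℝ | ∀ x, f x ∈ Set.Icc (0:ℝ) 1}) := by
    ext f
    simp [Xset, Set.mem_inter_iff, and_assoc]
  rw [he]
  exact h1.inter (h2.inter h3)

omit hα in
noncomputable def clampF : ℝ →ᵇ ℝ :=
  ⟨⟨fun x => min 1 (max 0 x), continuous_const.min (continuous_const.max continuous_id)⟩,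
    ⟨1, fun x y => by
      apply Real.dist_le_of_mem_Icc_01 <;>
        constructor <;> simp [le_max_iff, min_le_iff, le_refl]⟩⟩

omit hα in
lemma clampF_mem : clampF ∈ Xset := by
  refine ⟨?_, ?_, fun x => ?_⟩
  · show min 1 (max 0 (0:ℝ)) = 0; norm_num
  · show min 1 (max 0 (1:ℝ)) = 1; norm_num
  · constructor
    · show (0:ℝ) ≤ min 1 (max 0 x); simp [le_max_iff, le_refl]
    · show min 1 (max 0 x) ≤ 1; simp

omit hα in
noncomputable def mK (α : ℝ) : NNReal := ⟨max α (1 - α), by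
  rcases le_total α (1-α) with h | h
  · rw [max_eq_right h]; nlinarith
  · rw [max_eq_left h]; nlinarith⟩

include hα in
lemma contracting : ContractingWith (mK α) (TX α hα) := by
  have habs : ∀ (c u v D : ℝ), 0 ≤ c → |u - v| ≤ D → |c * u - c * v| ≤ c * D := by
    intro c u v D hc h
    have : c * u - c * v = c * (u - v) := by ring
    rw [this, abs_mul, abs_of_nonneg hc]
    exact mul_le_mul_of_nonneg_left h hc
  constructor
  · exact_mod_cast m_lt_one hα
  · apply LipschitzWith.of_dist_le_mul
    intro f g
    rw [Subtype.dist_eq, BoundedContinuousFunction.dist_le (by positivity)]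
    intro x
    have hd : (mK α : ℝ) = max α (1 - α) := rfl
    show dist (Tf α f.1 x) (Tf α g.1 x) ≤ _
    have hfg := BoundedContinuousFunction.dist_coe_le_dist (f := f.1) (g := g.1) (2*x)
    have hfg' := BoundedContinuousFunction.dist_coe_le_dist (f := f.1) (g := g.1) (2*x - 1)
    have hm1 : α ≤ max α (1-α) := le_max_left _ _
    have hm2 : 1 - α ≤ max α (1-α) := le_max_right _ _
    have hdn : (0:ℝ) ≤ dist f.1 g.1 := dist_nonneg
    rw [Real.dist_eq] at hfg hfg'
    rw [Tf, Tf]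
    split
    · rw [Real.dist_eq]
      calc |α * f.1 (2*x) - α * g.1 (2*x)| ≤ α * dist f.1 g.1 :=
            habs _ _ _ _ hα.1.le hfg
        _ ≤ (mK α : ℝ) * dist f.1 g.1 := by
            rw [hd]; exact mul_le_mul_of_nonneg_right hm1 hdn
    · rw [Real.dist_eq]
      have e : α + (1-α) * f.1 (2*x-1) - (α + (1-α) * g.1 (2*x-1))
          = (1-α) * f.1 (2*x-1) - (1-α) * g.1 (2*x-1) := by ring
      calc |α + (1-α) * f.1 (2*x-1) - (α + (1-α) * g.1 (2*x-1))|
          = |(1-α) * f.1 (2*x-1) - (1-α) * g.1 (2*x-1)| := by rw [e]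
        _ ≤ (1-α) * dist f.1 g.1 := habs _ _ _ _ (by linarith [hα.2]) hfg'
        _ ≤ (mK α : ℝ) * dist f.1 g.1 := by
            rw [hd]; exact mul_le_mul_of_nonneg_right hm2 hdn



noncomputable def GX (α : ℝ) (hα : α ∈ Set.Ioo (0:ℝ) 1) : ↥Xset :=
  letI : Nonempty ↥Xset := ⟨⟨clampF, clampF_mem⟩⟩
  letI : CompleteSpace ↥Xset := isClosed_Xset.completeSpace_coe
  ContractingWith.fixedPoint (TX α hα) (contracting hα)

include hα in
lemma GX_fixed : TX α hα (GX α hα) = GX α hα := by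
  letI : Nonempty ↥Xset := ⟨⟨clampF, clampF_mem⟩⟩
  letI : CompleteSpace ↥Xset := isClosed_Xset.completeSpace_coe
  exact ContractingWith.fixedPoint_isFixedPt (contracting hα)

noncomputable def G (α : ℝ) (hα : α ∈ Set.Ioo (0:ℝ) 1) : ℝ → ℝ := fun t => (GX α hα).1 t

include hα in
lemma G_eq (t : ℝ) : G α hα t = Tf α (G α hα) t := by
  conv_lhs => rw [G, ← GX_fixed hα]
  rfl

include hα in
lemma G_zero : G α hα 0 = 0 := (GX α hα).2.1

include hα in
lemma G_one : G α hα 1 = 1 := (GX α hα).2.2.1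

include hα in
lemma G_mem (t : ℝ) : G α hα t ∈ Set.Icc (0:ℝ) 1 := (GX α hα).2.2.2 t

include hα in
lemma G_half {t : ℝ} (h0 : 0 ≤ t) (h1 : t ≤ 1) : G α hα (t/2) = α * G α hα t := by
  rw [G_eq hα, Tf, if_pos (by linarith : t/2 ≤ 1/2), show (2:ℝ)*(t/2) = t by ring]

include hα in
lemma G_half' {t : ℝ} (h0 : 0 ≤ t) (h1 : t ≤ 1) :
    G α hα ((1+t)/2) = α + (1-α) * G α hα t := by
  rcases eq_or_lt_of_le h0 with h | h
  · have ht : t = 0 := h.symm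
    subst ht
    rw [show ((1:ℝ)+0)/2 = 1/2 by norm_num, G_eq hα, Tf, if_pos (le_refl _),
      show (2:ℝ)*(1/2) = 1 by norm_num, G_one hα, G_zero hα]
    ring
  · rw [G_eq hα, Tf, if_neg (by push_neg; linarith : ¬ (1+t)/2 ≤ 1/2),
      show (2:ℝ)*((1+t)/2) - 1 = t by ring]



include hα in
lemma key (n : ℕ) : ∀ x : ℕ → ℕ, (∀ i, x i ≤ 1) →
    |G α hα (rsum x) - S α x| ≤ (max α (1-α))^n := by
  induction n with
  | zero =>
    intro x hx
    simp only [pow_zero]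
    have h1 := G_mem hα (rsum x)
    have h2 := S_nonneg hα x
    have h3 := S_le_one hα hx
    rw [abs_le]
    exact ⟨by linarith [h1.1], by linarith [h1.2]⟩
  | succ n ih =>
    intro x hx
    have hs0 := rsum_nonneg (shf x)
    have hs1 := rsum_le_one (shf_le hx)
    have hrec := rsum_rec hx
    have hS := S_rec hα hx
    have hm1 : α ≤ max α (1-α) := le_max_left _ _
    have hm2 : 1-α ≤ max α (1-α) := le_max_right _ _
    have hmn : (0:ℝ) ≤ (max α (1-α))^n := pow_nonneg (m_nonneg hα) n
    have hih := ih (shf x) (shf_le hx)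
    rcases Nat.le_one_iff_eq_zero_or_eq_one.mp (hx 1) with h | h
    · rw [if_pos h] at hS
      have he : rsum x = rsum (shf x) / 2 := by rw [hrec, h]; norm_num
      rw [he, G_half hα hs0 hs1, hS,
        show α * G α hα (rsum (shf x)) - α * S α (shf x)
          = α * (G α hα (rsum (shf x)) - S α (shf x)) by ring,
        abs_mul, abs_of_nonneg hα.1.le]
      calc α * |G α hα (rsum (shf x)) - S α (shf x)|
          ≤ (max α (1-α)) * (max α (1-α))^n :=
            mul_le_mul hm1 hih (abs_nonneg _) (m_nonneg hα)
        _ = (max α (1-α))^(n+1) := (pow_succ' _ _).symm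
    · rw [if_neg (by simp [h])] at hS
      have he : rsum x = (1 + rsum (shf x)) / 2 := by rw [hrec, h]; push_cast; ring
      rw [he, G_half' hα hs0 hs1, hS,
        show α + (1-α) * G α hα (rsum (shf x)) - (α + (1-α) * S α (shf x))
          = (1-α) * (G α hα (rsum (shf x)) - S α (shf x)) by ring,
        abs_mul, abs_of_nonneg (by linarith [hα.2] : (0:ℝ) ≤ 1-α)]
      calc (1-α) * |G α hα (rsum (shf x)) - S α (shf x)|
          ≤ (max α (1-α)) * (max α (1-α))^n :=
            mul_le_mul hm2 hih (abs_nonneg _) (m_nonneg hα)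
        _ = (max α (1-α))^(n+1) := (pow_succ' _ _).symm

include hα in
lemma G_rsum {x : ℕ → ℕ} (hx : ∀ i, x i ≤ 1) : G α hα (rsum x) = S α x := by
  have h : ∀ n, |G α hα (rsum x) - S α x| ≤ (max α (1-α))^n := fun n => key hα n x hx
  have hlim : Tendsto (fun n : ℕ => (max α (1-α))^n) atTop (nhds 0) :=
    tendsto_pow_atTop_nhds_zero_of_lt_one (m_nonneg hα) (m_lt_one hα)
  have h0 : |G α hα (rsum x) - S α x| ≤ 0 := ge_of_tendsto' hlim h
  have := abs_nonpos_iff.mp h0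
  linarith [sub_eq_zero.mp this]

end Stmt7

/-- For `α ∈ (0,1)`, the function given on binary expansions by
`g(Σ x_i 2^{-i}) = Σ x_i (1-α)^{σ_{i-1}} α^{i-σ_{i-1}}` is well defined
(independent of the binary expansion) and continuous on `[0,1]`, mapping into `[0,1]`. -/
theorem stmt7 (α : ℝ) (hα : α ∈ Set.Ioo (0 : ℝ) 1) :
    ∃ g : ℝ → ℝ,
      (∀ x : ℕ → ℕ, (∀ i, x i ≤ 1) →
        g (∑' i : ℕ, (x (i + 1) : ℝ) / 2 ^ (i + 1)) =
          ∑' i : ℕ, (x (i + 1) : ℝ) * (1 - α) ^ (∑ j ∈ Finset.range i, x (j + 1)) *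
            α ^ ((i + 1) - ∑ j ∈ Finset.range i, x (j + 1))) ∧
      ContinuousOn g (Set.Icc 0 1) ∧
      Set.MapsTo g (Set.Icc 0 1) (Set.Icc 0 1) := by
  refine ⟨Stmt7.G α hα, ?_, ?_, ?_⟩
  · intro x hx
    exact Stmt7.G_rsum hα hx
  · exact ((Stmt7.GX α hα).1.continuous).continuousOn
  · intro t _
    exact Stmt7.G_mem hα t
end

section
/- For α ∈ (0,1) with α ≠ 1/2, the function g : [0,1] → [0,1] defined on binary expansions by g(Σ_{i≥1} x_i 2^{−i}) = Σ_{i=1}^∞ x_i · (1−α)^(Σ_{j=1}^{i-1} x_j) · α^(i − Σ_{j=1}^{i-1} x_j) is strictly increasing, with g(0) = 0 and g(1) = 1. -/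
open Finset Filter Topology

noncomputable section

namespace Stmt8Aux

/-- partial digit sum -/
def sig (d : ℕ → ℕ) (n : ℕ) : ℕ := ∑ j ∈ Finset.range n, d j

/-- the `i`-th term of Salem's series -/
def term (a : ℝ) (d : ℕ → ℕ) (i : ℕ) : ℝ :=
  (d i : ℝ) * (1 - a) ^ (sig d i) * a ^ ((i + 1) - sig d i)

/-- cylinder weight -/
def wt (a : ℝ) (d : ℕ → ℕ) (n : ℕ) : ℝ :=
  (1 - a) ^ (sig d n) * a ^ (n - sig d n)

/-- Salem's function evaluated on a digit sequence -/
def S (a : ℝ) (d : ℕ → ℕ) : ℝ := ∑' i, term a d i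

variable {a : ℝ} {d e : ℕ → ℕ}

lemma sig_le (hd : ∀ i, d i ≤ 1) (n : ℕ) : sig d n ≤ n := by
  calc sig d n ≤ ∑ _j ∈ range n, 1 := Finset.sum_le_sum fun j _ => hd j
  _ = n := by simp

lemma wt_pos (ha0 : 0 < a) (ha1 : a < 1) (n : ℕ) : 0 < wt a d n :=
  mul_pos (pow_pos (by linarith) _) (pow_pos ha0 _)

lemma wt_le_one (ha0 : 0 < a) (ha1 : a < 1) (n : ℕ) : wt a d n ≤ 1 := by
  have h1 : (1 - a) ^ (sig d n) ≤ 1 := pow_le_one₀ (by linarith) (by linarith)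
  have h2 : a ^ (n - sig d n) ≤ 1 := pow_le_one₀ ha0.le ha1.le
  calc wt a d n ≤ 1 * 1 := by
        apply mul_le_mul h1 h2 (pow_pos ha0 _).le zero_le_one
  _ = 1 := by ring

lemma term_eq (hd : ∀ i, d i ≤ 1) (i : ℕ) :
    term a d i = (d i : ℝ) * a * wt a d i := by
  have h : (i + 1) - sig d i = (i - sig d i) + 1 := by
    have := sig_le hd i; omega
  simp only [term, wt, h, pow_succ]
  ring

lemma term_nonneg (ha0 : 0 < a) (ha1 : a < 1) (i : ℕ) : 0 ≤ term a d i := by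
  apply mul_nonneg (mul_nonneg (Nat.cast_nonneg _) (pow_nonneg (by linarith) _))
    (pow_nonneg ha0.le _)

lemma term_of_zero (hi : d i = 0) : term a d i = 0 := by simp [term, hi]

lemma term_of_one (hd : ∀ i, d i ≤ 1) (hi : d i = 1) :
    term a d i = a * wt a d i := by
  rw [term_eq hd, hi]; push_cast; ring

lemma wt_succ_of_zero (hd : ∀ i, d i ≤ 1) (h : d n = 0) :
    wt a d (n + 1) = a * wt a d n := by
  have hs : sig d (n + 1) = sig d n := by
    simp [sig, Finset.sum_range_succ, h]
  have hle := sig_le hd n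
  rw [wt, hs, show n + 1 - sig d n = (n - sig d n) + 1 by omega, wt, pow_succ]; ring

lemma wt_succ_of_one (hd : ∀ i, d i ≤ 1) (h : d n = 1) :
    wt a d (n + 1) = (1 - a) * wt a d n := by
  have hs : sig d (n + 1) = sig d n + 1 := by
    simp [sig, Finset.sum_range_succ, h]
  have hle := sig_le hd n
  rw [wt, hs, show n + 1 - (sig d n + 1) = n - sig d n by omega, wt, pow_succ]; ring

lemma wt_le_geom (ha0 : 0 < a) (ha1 : a < 1) (hd : ∀ i, d i ≤ 1) (n : ℕ) :
    wt a d n ≤ (max a (1 - a)) ^ n := by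
  have h1 : (1 - a) ^ (sig d n) ≤ (max a (1 - a)) ^ (sig d n) :=
    pow_le_pow_left₀ (by linarith) (le_max_right _ _) _
  have h2 : a ^ (n - sig d n) ≤ (max a (1 - a)) ^ (n - sig d n) :=
    pow_le_pow_left₀ ha0.le (le_max_left _ _) _
  calc wt a d n ≤ (max a (1 - a)) ^ (sig d n) * (max a (1 - a)) ^ (n - sig d n) := by
        apply mul_le_mul h1 h2 (pow_pos ha0 _).le (pow_nonneg (by positivity) _)
  _ = (max a (1 - a)) ^ n := by
        rw [← pow_add]; congr 1; have := sig_le hd n; omega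

lemma summable_term (ha0 : 0 < a) (ha1 : a < 1) (hd : ∀ i, d i ≤ 1) :
    Summable (term a d) := by
  have hle : ∀ i, term a d i ≤ (max a (1 - a)) ^ i := by
    intro i
    rw [term_eq hd]
    have h1 : (d i : ℝ) * a ≤ 1 := by
      have h2 := hd i
      have h3 : (d i : ℝ) ≤ 1 := by exact_mod_cast h2
      nlinarith
    calc (d i : ℝ) * a * wt a d i ≤ 1 * wt a d i :=
          mul_le_mul_of_nonneg_right h1 (wt_pos ha0 ha1 i).le
    _ = wt a d i := one_mul _
    _ ≤ (max a (1 - a)) ^ i := wt_le_geom ha0 ha1 hd i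
  exact Summable.of_nonneg_of_le (term_nonneg ha0 ha1) hle
    (summable_geometric_of_lt_one (by positivity) (max_lt ha1 (by linarith)))

lemma sum_Ico_term_le (ha0 : 0 < a) (ha1 : a < 1) (hd : ∀ i, d i ≤ 1) (N M : ℕ) :
    ∑ i ∈ Finset.Ico N (N + M), term a d i ≤ wt a d N - wt a d (N + M) := by
  induction M with
  | zero => simp
  | succ M ih =>
    rw [show N + (M + 1) = (N + M) + 1 by omega,
      Finset.sum_Ico_succ_top (by omega)]
    rcases Nat.le_one_iff_eq_zero_or_eq_one.mp (hd (N + M)) with h | h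
    · rw [term_of_zero h, wt_succ_of_zero hd h]
      have := wt_pos (d := d) ha0 ha1 (N + M)
      nlinarith
    · rw [term_of_one hd h, wt_succ_of_one hd h]
      linarith

lemma tail_le (ha0 : 0 < a) (ha1 : a < 1) (hd : ∀ i, d i ≤ 1) (N : ℕ) :
    ∑' k, term a d (k + N) ≤ wt a d N := by
  apply Real.tsum_le_of_sum_range_le (fun k => term_nonneg ha0 ha1 _)
  intro M
  have h : ∑ k ∈ range M, term a d (k + N) = ∑ i ∈ Finset.Ico N (N + M), term a d i := by
    rw [Finset.sum_Ico_eq_sum_range]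
    simp only [Nat.add_sub_cancel_left]
    apply Finset.sum_congr rfl
    intro k _; congr 1; omega
  rw [h]
  have := sum_Ico_term_le ha0 ha1 hd N M
  have := wt_pos (d := d) ha0 ha1 (N + M)
  linarith

lemma S_split (ha0 : 0 < a) (ha1 : a < 1) (hd : ∀ i, d i ≤ 1) (N : ℕ) :
    S a d = (∑ i ∈ range N, term a d i) + ∑' k, term a d (k + N) :=
  (Summable.sum_add_tsum_nat_add N (summable_term ha0 ha1 hd)).symm

lemma S_upper (ha0 : 0 < a) (ha1 : a < 1) (hd : ∀ i, d i ≤ 1) {n : ℕ} (h0 : d n = 0) :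
    S a d ≤ (∑ i ∈ range n, term a d i) + a * wt a d n := by
  rw [S_split ha0 ha1 hd (n + 1), Finset.sum_range_succ, term_of_zero h0]
  have := tail_le ha0 ha1 hd (n + 1)
  rw [wt_succ_of_zero hd h0] at this
  linarith

lemma S_lower (ha0 : 0 < a) (ha1 : a < 1) (hd : ∀ i, d i ≤ 1) {n : ℕ} (h1 : d n = 1) :
    (∑ i ∈ range n, term a d i) + a * wt a d n ≤ S a d := by
  rw [S_split ha0 ha1 hd (n + 1), Finset.sum_range_succ, term_of_one hd h1]
  have : 0 ≤ ∑' k, term a d (k + (n + 1)) :=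
    tsum_nonneg fun k => term_nonneg ha0 ha1 _
  linarith

lemma tail_lt (ha0 : 0 < a) (ha1 : a < 1) (hd : ∀ i, d i ≤ 1) {N m : ℕ}
    (hm : N ≤ m) (h0 : d m = 0) :
    ∑' k, term a d (k + N) < wt a d N := by
  have hsum : Summable (fun k => term a d (k + N)) :=
    ((summable_term ha0 ha1 hd).comp_injective (add_left_injective N))
  have hsplit := Summable.sum_add_tsum_nat_add (m + 1 - N) hsum
  have hre : (fun k => term a d (k + (m + 1 - N) + N)) = fun k => term a d (k + (m + 1)) := by
    funext k; congr 1; omega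
  rw [hre] at hsplit
  have h1 : ∑ k ∈ range (m + 1 - N), term a d (k + N)
      ≤ wt a d N - (1 - a) * wt a d m - a * wt a d m := by
    have he : ∑ k ∈ range (m + 1 - N), term a d (k + N)
        = ∑ i ∈ Finset.Ico N (N + (m + 1 - N)), term a d i := by
      rw [Finset.sum_Ico_eq_sum_range]
      simp only [Nat.add_sub_cancel_left]
      apply Finset.sum_congr rfl; intro k _; congr 1; omega
    rw [he, show N + (m + 1 - N) = m + 1 by omega,
      Finset.sum_Ico_succ_top (by omega), term_of_zero h0]
    have := sum_Ico_term_le ha0 ha1 hd N (m - N)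
    rw [show N + (m - N) = m by omega] at this
    rw [show wt a d m = (1 - a) * wt a d m + a * wt a d m by ring] at this
    linarith
  have h2 : ∑' k, term a d (k + (m + 1)) ≤ wt a d (m + 1) := tail_le ha0 ha1 hd (m + 1)
  rw [wt_succ_of_zero hd h0] at h2
  have h3 := wt_pos (d := d) ha0 ha1 m
  have : 0 < (1 - a) * wt a d m := mul_pos (by linarith) h3
  linarith [hsplit]

lemma sig_add_of_ones (hd : ∀ i, d i ≤ 1) {N : ℕ} (h1 : ∀ i, N ≤ i → d i = 1) (k : ℕ) :
    sig d (N + k) = sig d N + k := by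
  induction k with
  | zero => simp
  | succ k ih =>
    rw [show N + (k + 1) = (N + k) + 1 by omega]
    rw [sig, Finset.sum_range_succ, ← sig, ih, h1 (N + k) (by omega)]; omega

lemma tail_of_ones (ha0 : 0 < a) (ha1 : a < 1) (hd : ∀ i, d i ≤ 1) {N : ℕ}
    (h1 : ∀ i, N ≤ i → d i = 1) :
    ∑' k, term a d (k + N) = wt a d N := by
  have hterm : ∀ k, term a d (k + N) = (a * wt a d N) * (1 - a) ^ k := by
    intro k
    have hs : sig d (k + N) = sig d N + k := by
      rw [add_comm k N]; exact sig_add_of_ones hd h1 k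
    have hdk : d (k + N) = 1 := h1 _ (by omega)
    have hle := sig_le hd N
    have hexp : (k + N + 1) - sig d (k + N) = (N - sig d N) + 1 := by omega
    rw [term, hdk, hs, show k + N + 1 - (sig d N + k) = (N - sig d N) + 1 by omega, wt, pow_add, pow_succ]
    push_cast; ring
  rw [tsum_congr hterm, tsum_mul_left,
    tsum_geometric_of_lt_one (by linarith) (by linarith)]
  have : (1 : ℝ) - (1 - a) = a := by ring
  rw [this]
  field_simp

lemma tail_of_zeros {N : ℕ} (h0 : ∀ i, N ≤ i → d i = 0) :
    ∑' k, term a d (k + N) = 0 := by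
  have : ∀ k, term a d (k + N) = 0 := fun k => term_of_zero (h0 _ (by omega))
  rw [tsum_congr this, tsum_zero]


variable {n : ℕ}

lemma sig_eq_of_prefix (hpre : ∀ i, i < n → d i = e i) {m : ℕ} (hm : m ≤ n) :
    sig d m = sig e m :=
  Finset.sum_congr rfl fun j hj => hpre j (by simp at hj; omega)

lemma wt_eq_of_prefix (hpre : ∀ i, i < n → d i = e i) : wt a d n = wt a e n := by
  rw [wt, wt, sig_eq_of_prefix hpre le_rfl]

lemma sum_eq_of_prefix (hpre : ∀ i, i < n → d i = e i) :
    ∑ i ∈ range n, term a d i = ∑ i ∈ range n, term a e i := by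
  apply Finset.sum_congr rfl
  intro i hi
  simp only [Finset.mem_range] at hi
  rw [term, term, hpre i hi, sig_eq_of_prefix hpre hi.le]

lemma S_le_S (ha0 : 0 < a) (ha1 : a < 1) (hd : ∀ i, d i ≤ 1) (he : ∀ i, e i ≤ 1)
    (hpre : ∀ i, i < n → d i = e i) (hd0 : d n = 0) (he1 : e n = 1) :
    S a d ≤ S a e := by
  calc S a d ≤ (∑ i ∈ range n, term a d i) + a * wt a d n := S_upper ha0 ha1 hd hd0
  _ = (∑ i ∈ range n, term a e i) + a * wt a e n := by
      rw [sum_eq_of_prefix hpre, wt_eq_of_prefix hpre]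
  _ ≤ S a e := S_lower ha0 ha1 he he1

lemma S_eq_S (ha0 : 0 < a) (ha1 : a < 1) (hd : ∀ i, d i ≤ 1) (he : ∀ i, e i ≤ 1)
    (hpre : ∀ i, i < n → d i = e i) (hd0 : d n = 0) (he1 : e n = 1)
    (hones : ∀ i, n < i → d i = 1) (hzeros : ∀ i, n < i → e i = 0) :
    S a d = S a e := by
  have hD : S a d = (∑ i ∈ range n, term a d i) + a * wt a d n := by
    rw [S_split ha0 ha1 hd (n + 1), Finset.sum_range_succ, term_of_zero hd0,
      tail_of_ones ha0 ha1 hd (fun i hi => hones i (by omega)),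
      wt_succ_of_zero hd hd0]
    ring
  have hE : S a e = (∑ i ∈ range n, term a e i) + a * wt a e n := by
    rw [S_split ha0 ha1 he (n + 1), Finset.sum_range_succ, term_of_one he he1,
      tail_of_zeros (fun i hi => hzeros i (by omega))]
    ring
  rw [hD, hE, sum_eq_of_prefix hpre, wt_eq_of_prefix hpre]

lemma S_lt_S (ha0 : 0 < a) (ha1 : a < 1) (hd : ∀ i, d i ≤ 1) (he : ∀ i, e i ≤ 1)
    (hpre : ∀ i, i < n → d i = e i) (hd0 : d n = 0) (he1 : e n = 1)
    (h : ¬((∀ i, n < i → d i = 1) ∧ (∀ i, n < i → e i = 0))) :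
    S a d < S a e := by
  rw [not_and_or] at h
  rcases h with h | h
  · push_neg at h
    obtain ⟨m, hm, hdm⟩ := h
    have hdm0 : d m = 0 := by have := hd m; omega
    have hlt : S a d < (∑ i ∈ range n, term a d i) + a * wt a d n := by
      rw [S_split ha0 ha1 hd (n + 1), Finset.sum_range_succ, term_of_zero hd0]
      have := tail_lt ha0 ha1 hd (show n + 1 ≤ m by omega) hdm0
      rw [wt_succ_of_zero hd hd0] at this
      linarith
    calc S a d < (∑ i ∈ range n, term a d i) + a * wt a d n := hlt
    _ = (∑ i ∈ range n, term a e i) + a * wt a e n := by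
        rw [sum_eq_of_prefix hpre, wt_eq_of_prefix hpre]
    _ ≤ S a e := S_lower ha0 ha1 he he1
  · push_neg at h
    obtain ⟨m, hm, hem⟩ := h
    have hem1 : e m = 1 := by have := he m; omega
    have h1 : (∑ i ∈ range (n + 1), term a e i) + term a e m
        ≤ ∑ i ∈ range (m + 1), term a e i := by
      have hsub : Finset.range (n + 1) ⊆ Finset.range m :=
        Finset.range_subset_range.2 (by omega)
      have := Finset.sum_le_sum_of_subset_of_nonneg hsub
        (fun i _ _ => term_nonneg (d := e) ha0 ha1 i)
      rw [Finset.sum_range_succ (n := m)]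
      linarith
    have h2 : ∑ i ∈ range (m + 1), term a e i ≤ S a e := by
      rw [S_split ha0 ha1 he (m + 1)]
      have : 0 ≤ ∑' k, term a e (k + (m + 1)) :=
        tsum_nonneg fun k => term_nonneg ha0 ha1 _
      linarith
    have h3 : 0 < term a e m := by
      rw [term_of_one he hem1]
      exact mul_pos ha0 (wt_pos ha0 ha1 m)
    have h4 : (∑ i ∈ range n, term a e i) + a * wt a e n
        = ∑ i ∈ range (n + 1), term a e i := by
      rw [Finset.sum_range_succ, term_of_one he he1]
    calc S a d ≤ (∑ i ∈ range n, term a d i) + a * wt a d n := S_upper ha0 ha1 hd hd0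
    _ = (∑ i ∈ range n, term a e i) + a * wt a e n := by
        rw [sum_eq_of_prefix hpre, wt_eq_of_prefix hpre]
    _ < S a e := by rw [h4]; linarith

lemma digit_cases (hd : ∀ i, d i ≤ 1) (he : ∀ i, e i ≤ 1) {m : ℕ} (h : d m ≠ e m) :
    (d m = 0 ∧ e m = 1) ∨ (d m = 1 ∧ e m = 0) := by
  have := hd m; have := he m; omega

lemma S_lt_of_half_lt (ha0 : 0 < a) (ha1 : a < 1) (hd : ∀ i, d i ≤ 1)
    (he : ∀ i, e i ≤ 1) (h : S (1/2) d < S (1/2) e) : S a d < S a e := by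
  have h0 : (0:ℝ) < 1/2 := by norm_num
  have h1 : (1:ℝ)/2 < 1 := by norm_num
  have hne : d ≠ e := fun hEq => absurd h (by rw [hEq]; exact lt_irrefl _)
  have hex : ∃ n, d n ≠ e n := Function.ne_iff.mp hne
  have hdn : d (Nat.find hex) ≠ e (Nat.find hex) := Nat.find_spec hex
  have hpre : ∀ i, i < Nat.find hex → d i = e i :=
    fun i hi => not_not.mp (Nat.find_min hex hi)
  rcases digit_cases hd he hdn with ⟨hd0, he1⟩ | ⟨hd1, he0⟩
  · by_cases htails : (∀ i, Nat.find hex < i → d i = 1) ∧ (∀ i, Nat.find hex < i → e i = 0)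
    · exact absurd (S_eq_S h0 h1 hd he hpre hd0 he1 htails.1 htails.2) h.ne
    · exact S_lt_S ha0 ha1 hd he hpre hd0 he1 htails
  · have := S_le_S h0 h1 he hd (fun i hi => (hpre i hi).symm) he0 hd1
    linarith

lemma S_eq_of_half_eq (ha0 : 0 < a) (ha1 : a < 1) (hd : ∀ i, d i ≤ 1)
    (he : ∀ i, e i ≤ 1) (h : S (1/2) d = S (1/2) e) : S a d = S a e := by
  have h0 : (0:ℝ) < 1/2 := by norm_num
  have h1 : (1:ℝ)/2 < 1 := by norm_num
  by_cases hne : d = e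
  · rw [hne]
  have hex : ∃ n, d n ≠ e n := Function.ne_iff.mp hne
  have hdn : d (Nat.find hex) ≠ e (Nat.find hex) := Nat.find_spec hex
  have hpre : ∀ i, i < Nat.find hex → d i = e i :=
    fun i hi => not_not.mp (Nat.find_min hex hi)
  rcases digit_cases hd he hdn with ⟨hd0, he1⟩ | ⟨hd1, he0⟩
  · by_cases htails : (∀ i, Nat.find hex < i → d i = 1) ∧ (∀ i, Nat.find hex < i → e i = 0)
    · exact S_eq_S ha0 ha1 hd he hpre hd0 he1 htails.1 htails.2
    · exact absurd (S_lt_S h0 h1 hd he hpre hd0 he1 htails) (by rw [h]; exact lt_irrefl _)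
  · have hpre' : ∀ i, i < Nat.find hex → e i = d i := fun i hi => (hpre i hi).symm
    by_cases htails : (∀ i, Nat.find hex < i → e i = 1) ∧ (∀ i, Nat.find hex < i → d i = 0)
    · exact (S_eq_S ha0 ha1 he hd hpre' he0 hd1 htails.1 htails.2).symm
    · exact absurd (S_lt_S h0 h1 he hd hpre' he0 hd1 htails) (by rw [h]; exact lt_irrefl _)

/-- value of a binary digit sequence -/
def vl (d : ℕ → ℕ) : ℝ := ∑' i, (d i : ℝ) / 2 ^ (i + 1)

lemma vl_eq_S_half (hd : ∀ i, d i ≤ 1) : vl d = S (1/2) d := by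
  apply tsum_congr
  intro i
  have hle := sig_le hd i
  rw [term, show (1:ℝ) - 1/2 = 1/2 by norm_num, mul_assoc, ← pow_add,
    show sig d i + (i + 1 - sig d i) = i + 1 by omega, one_div, inv_pow,
    div_eq_mul_inv]

lemma S_nonneg (ha0 : 0 < a) (ha1 : a < 1) : 0 ≤ S a d :=
  tsum_nonneg fun i => term_nonneg ha0 ha1 i

lemma wt_zero : wt a d 0 = 1 := by simp [wt, sig]

lemma tail_zero_eq_S : ∑' k, term a d (k + 0) = S a d := by
  apply tsum_congr; intro k; rw [add_zero]

lemma S_le_one (ha0 : 0 < a) (ha1 : a < 1) (hd : ∀ i, d i ≤ 1) : S a d ≤ 1 := by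
  have := tail_le ha0 ha1 hd 0
  rw [tail_zero_eq_S, wt_zero] at this
  exact this

lemma S_all_ones (ha0 : 0 < a) (ha1 : a < 1) : S a (fun _ => 1) = 1 := by
  have := tail_of_ones (d := fun _ => 1) ha0 ha1 (fun _ => le_rfl)
    (N := 0) (fun i _ => rfl)
  rw [tail_zero_eq_S, wt_zero] at this
  exact this

lemma S_all_zeros : S a (fun _ => 0) = 0 := by
  simp [S, term]

set_option maxHeartbeats 1000000 in
lemma exists_rep {t : ℝ} (ht : t ∈ Set.Icc (0:ℝ) 1) :
    ∃ d : ℕ → ℕ, (∀ i, d i ≤ 1) ∧ vl d = t := by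
  obtain ⟨ht0, ht1⟩ := ht
  rcases eq_or_lt_of_le ht1 with h1 | h1
  · refine ⟨fun _ => 1, fun _ => le_rfl, ?_⟩
    rw [vl_eq_S_half (fun _ => le_rfl), S_all_ones (by norm_num) (by norm_num), h1]
  · -- binary expansion of t ∈ [0,1)
    set d : ℕ → ℕ := fun i => ⌊2 ^ (i+1) * t⌋₊ - 2 * ⌊2 ^ i * t⌋₊ with hddef
    have key1 : ∀ i : ℕ, 2 * ⌊2 ^ i * t⌋₊ ≤ ⌊2 ^ (i+1) * t⌋₊ := by
      intro i
      apply Nat.le_floor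
      push_cast
      have := Nat.floor_le (show (0:ℝ) ≤ 2 ^ i * t by positivity)
      rw [pow_succ]
      nlinarith
    have key2 : ∀ i : ℕ, ⌊2 ^ (i+1) * t⌋₊ ≤ 2 * ⌊2 ^ i * t⌋₊ + 1 := by
      intro i
      have hlt : ⌊2 ^ (i+1) * t⌋₊ < 2 * ⌊2 ^ i * t⌋₊ + 2 := by
        rw [Nat.floor_lt (by positivity)]
        push_cast
        have := Nat.lt_floor_add_one (2 ^ i * t)
        rw [pow_succ]
        nlinarith
      omega
    have hd : ∀ i, d i ≤ 1 := by
      intro i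
      have := key1 i; have := key2 i
      simp only [hddef]; omega
    have hcast : ∀ i : ℕ, (d i : ℝ) = (⌊2 ^ (i+1) * t⌋₊ : ℝ) - 2 * ⌊2 ^ i * t⌋₊ := by
      intro i
      simp only [hddef]
      rw [Nat.cast_sub (key1 i)]
      push_cast; ring
    have hpartial : ∀ N : ℕ, ∑ i ∈ range N, (d i : ℝ) / 2 ^ (i+1)
        = (⌊2 ^ N * t⌋₊ : ℝ) / 2 ^ N := by
      intro N
      induction N with
      | zero =>
        simp [Nat.floor_eq_zero.2 h1]
      | succ N ih =>
        rw [Finset.sum_range_succ, ih, hcast N]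
        have h2 : (0:ℝ) < 2 ^ N := by positivity
        have h3 : (0:ℝ) < 2 ^ (N+1) := by positivity
        field_simp
        ring
    have hnn : ∀ i : ℕ, (0:ℝ) ≤ (d i : ℝ) / 2 ^ (i+1) := fun i => by positivity
    have hle : ∀ i : ℕ, (d i : ℝ) / 2 ^ (i+1) ≤ (1/2 : ℝ) ^ i := by
      intro i
      have hd1 : (d i : ℝ) ≤ 1 := by exact_mod_cast hd i
      have h2 : (0:ℝ) < 2 ^ (i+1) := by positivity
      rw [div_le_iff₀ h2, one_div, inv_pow, pow_succ]
      have h4 : (0:ℝ) < 2 ^ i := by positivity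
      have h5 : ((2:ℝ) ^ i)⁻¹ * (2 ^ i * 2) = 2 := by field_simp
      rw [h5]
      linarith
    have hgeo : Summable (fun i : ℕ => (1/2 : ℝ) ^ i) :=
      summable_geometric_of_lt_one (by norm_num) (by norm_num)
    have hsummable : Summable (fun i => (d i : ℝ) / 2 ^ (i+1)) :=
      Summable.of_nonneg_of_le hnn hle hgeo
    have htend1 : Filter.Tendsto (fun N => ∑ i ∈ range N, (d i : ℝ) / 2 ^ (i+1))
        Filter.atTop (nhds t) := by
      have heq : (fun N => ∑ i ∈ range N, (d i : ℝ) / 2 ^ (i+1))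
          = fun N => (⌊2 ^ N * t⌋₊ : ℝ) / 2 ^ N := funext hpartial
      rw [heq]
      apply tendsto_of_tendsto_of_tendsto_of_le_of_le
        (g := fun N : ℕ => t - (1/2 : ℝ) ^ N) (h := fun _ : ℕ => t)
      · have : Filter.Tendsto (fun N : ℕ => (1/2 : ℝ) ^ N) Filter.atTop (nhds 0) :=
          tendsto_pow_atTop_nhds_zero_of_lt_one (by norm_num) (by norm_num)
        simpa using tendsto_const_nhds.sub this
      · exact tendsto_const_nhds
      · intro N
        have h2 : (0:ℝ) < 2 ^ N := by positivity
        have hfl := Nat.sub_one_lt_floor (2 ^ N * t)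
        rw [le_div_iff₀ h2]
        have h5 : ((1:ℝ)/2) ^ N * 2 ^ N = 1 := by
          rw [div_pow, one_pow]; field_simp
        nlinarith
      · intro N
        have h2 : (0:ℝ) < 2 ^ N := by positivity
        rw [div_le_iff₀ h2]
        have := Nat.floor_le (show (0:ℝ) ≤ 2 ^ N * t by positivity)
        linarith
    have htend2 := hsummable.hasSum.tendsto_sum_nat
    exact ⟨d, hd, tendsto_nhds_unique htend2 htend1⟩

end Stmt8Aux



/-- For `α ∈ (0,1)`, `α ≠ 1/2`, the function given on binary expansions by
`g(Σ x_i 2^{-i}) = Σ x_i (1-α)^{σ_{i-1}} α^{i-σ_{i-1}}` maps `[0,1]` into `[0,1]`,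
is strictly increasing on `[0,1]`, with `g 0 = 0` and `g 1 = 1`. -/
theorem stmt8 (α : ℝ) (hα : α ∈ Set.Ioo (0 : ℝ) 1) (hα' : α ≠ 1 / 2) :
    ∃ g : ℝ → ℝ,
      (∀ x : ℕ → ℕ, (∀ i, x i ≤ 1) →
        g (∑' i : ℕ, (x (i + 1) : ℝ) / 2 ^ (i + 1)) =
          ∑' i : ℕ, (x (i + 1) : ℝ) * (1 - α) ^ (∑ j ∈ Finset.range i, x (j + 1)) *
            α ^ ((i + 1) - ∑ j ∈ Finset.range i, x (j + 1))) ∧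
      Set.MapsTo g (Set.Icc 0 1) (Set.Icc 0 1) ∧
      StrictMonoOn g (Set.Icc 0 1) ∧
      g 0 = 0 ∧ g 1 = 1 := by
  classical
  obtain ⟨hα0, hα1⟩ := hα
  set g : ℝ → ℝ := fun t =>
    if h : ∃ d : ℕ → ℕ, (∀ i, d i ≤ 1) ∧ Stmt8Aux.vl d = t
    then Stmt8Aux.S α h.choose else 0 with hgdef
  have hg : ∀ d : ℕ → ℕ, (∀ i, d i ≤ 1) → g (Stmt8Aux.vl d) = Stmt8Aux.S α d := by
    intro d hd
    have hex : ∃ e : ℕ → ℕ, (∀ i, e i ≤ 1) ∧ Stmt8Aux.vl e = Stmt8Aux.vl d :=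
      ⟨d, hd, rfl⟩
    rw [hgdef]
    simp only [dif_pos hex]
    obtain ⟨he, hv⟩ := hex.choose_spec
    apply Stmt8Aux.S_eq_of_half_eq hα0 hα1 he hd
    rw [← Stmt8Aux.vl_eq_S_half he, ← Stmt8Aux.vl_eq_S_half hd, hv]
  refine ⟨g, ?_, ?_, ?_, ?_, ?_⟩
  · intro x hx
    have hd : ∀ i, (fun i => x (i + 1)) i ≤ 1 := fun i => hx (i + 1)
    have h := hg _ hd
    simpa [Stmt8Aux.vl, Stmt8Aux.S, Stmt8Aux.term, Stmt8Aux.sig] using h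
  · intro t ht
    obtain ⟨d, hd, hv⟩ := Stmt8Aux.exists_rep ht
    rw [← hv, hg d hd]
    exact ⟨Stmt8Aux.S_nonneg hα0 hα1, Stmt8Aux.S_le_one hα0 hα1 hd⟩
  · intro s hs t ht hst
    obtain ⟨d, hd, hvd⟩ := Stmt8Aux.exists_rep hs
    obtain ⟨e, he, hve⟩ := Stmt8Aux.exists_rep ht
    rw [← hvd, ← hve, hg d hd, hg e he]
    apply Stmt8Aux.S_lt_of_half_lt hα0 hα1 hd he
    rw [← Stmt8Aux.vl_eq_S_half hd, ← Stmt8Aux.vl_eq_S_half he, hvd, hve]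
    exact hst
  · have h0 : Stmt8Aux.vl (fun _ => 0) = 0 := by simp [Stmt8Aux.vl]
    have h := hg (fun _ => 0) (fun _ => by norm_num)
    rw [h0] at h
    rw [h, Stmt8Aux.S_all_zeros]
  · have h1 : Stmt8Aux.vl (fun _ => 1) = 1 := by
      rw [Stmt8Aux.vl_eq_S_half (fun _ => le_rfl),
        Stmt8Aux.S_all_ones (by norm_num) (by norm_num)]
    have h := hg (fun _ => 1) (fun _ => le_rfl)
    rw [h1] at h
    rw [h, Stmt8Aux.S_all_ones hα0 hα1]
end
end

section
/- Let M ≥ 2 be an integer, num(n) = M^(s₂(n)) and cum(n) = Σ_{m=0}^n num(m) (so cum(2^k − 1) = (M+1)^k). Then for any n with binary expansion n = Σ_{i=1}^k x_i 2^{k−i} (digits x_i ∈ {0,1}), cum(n − 1) = Σ_{i=1}^k x_i · num(Σ_{j=1}^{i−1} x_j 2^{k−j}) · cum(2^{k−i} − 1) = Σ_{i=1}^k x_i · M^(Σ_{j=1}^{i−1} x_j) · (M+1)^(k−i). -/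
open Finset

private def sdig (n : ℕ) : ℕ := (Nat.digits 2 n).sum

private lemma sdig_two_mul (p : ℕ) : sdig (2 * p) = sdig p := by
  rcases Nat.eq_zero_or_pos p with h | h
  · simp [sdig, h]
  · unfold sdig
    rw [Nat.digits_def' (by norm_num : 1 < 2) (by omega)]
    simp [Nat.mul_mod_right, Nat.mul_div_cancel_left _ (by norm_num : 0 < 2)]

private lemma sdig_two_mul_add_one (p : ℕ) : sdig (2 * p + 1) = sdig p + 1 := by
  unfold sdig
  rw [Nat.digits_def' (by norm_num : 1 < 2) (by omega)]
  have h1 : (2 * p + 1) % 2 = 1 := by omega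
  have h2 : (2 * p + 1) / 2 = p := by omega
  rw [h1, h2]; simp [Nat.add_comm]

private lemma sdig_mul_pow (m t : ℕ) : sdig (m * 2 ^ t) = sdig m := by
  induction t with
  | zero => simp
  | succ t ih =>
    have : m * 2 ^ (t + 1) = 2 * (m * 2 ^ t) := by ring
    rw [this, sdig_two_mul, ih]

private def F (M n : ℕ) : ℕ := ∑ m ∈ range n, M ^ sdig m

private lemma F_two_mul (M p : ℕ) : F M (2 * p) = (M + 1) * F M p := by
  induction p with
  | zero => simp [F]
  | succ p ih =>
    have h : 2 * (p + 1) = (2 * p + 1) + 1 := by ring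
    rw [h]
    simp only [F, Finset.sum_range_succ] at ih ⊢
    rw [ih, sdig_two_mul, sdig_two_mul_add_one]
    ring

private lemma F_two_mul_add_one (M p : ℕ) :
    F M (2 * p + 1) = (M + 1) * F M p + M ^ sdig p := by
  rw [F, Finset.sum_range_succ, ← F, F_two_mul, sdig_two_mul]

private lemma F_pow (M t : ℕ) : F M (2 ^ t) = (M + 1) ^ t := by
  induction t with
  | zero => simp [F, sdig]
  | succ t ih =>
    have : (2 : ℕ) ^ (t + 1) = 2 * 2 ^ t := by ring
    rw [this, F_two_mul, ih, pow_succ]; ring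

private lemma main_lem (M : ℕ) (x : ℕ → ℕ) (hx : ∀ i, x i ≤ 1) (k : ℕ) :
    sdig (∑ i ∈ Icc 1 k, x i * 2 ^ (k - i)) = ∑ i ∈ Icc 1 k, x i ∧
    F M (∑ i ∈ Icc 1 k, x i * 2 ^ (k - i)) =
      ∑ i ∈ Icc 1 k, x i * M ^ (∑ j ∈ Icc 1 (i - 1), x j) * (M + 1) ^ (k - i) := by
  induction k with
  | zero => simp [sdig, F]
  | succ k ih =>
    have hn : ∑ i ∈ Icc 1 (k + 1), x i * 2 ^ (k + 1 - i)
        = 2 * (∑ i ∈ Icc 1 k, x i * 2 ^ (k - i)) + x (k + 1) := by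
      rw [Finset.sum_Icc_succ_top (by omega : 1 ≤ k + 1), Finset.mul_sum]
      simp only [Nat.sub_self, pow_zero, mul_one]
      congr 1
      apply Finset.sum_congr rfl
      intro i hi
      simp only [Finset.mem_Icc] at hi
      have : k + 1 - i = (k - i) + 1 := by omega
      rw [this, pow_succ]; ring
    have hrhs : ∑ i ∈ Icc 1 (k + 1), x i * M ^ (∑ j ∈ Icc 1 (i - 1), x j) * (M + 1) ^ (k + 1 - i)
        = (M + 1) * (∑ i ∈ Icc 1 k, x i * M ^ (∑ j ∈ Icc 1 (i - 1), x j) * (M + 1) ^ (k - i))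
          + x (k + 1) * M ^ (∑ j ∈ Icc 1 k, x j) := by
      rw [Finset.sum_Icc_succ_top (by omega : 1 ≤ k + 1), Finset.mul_sum]
      simp only [Nat.add_sub_cancel, Nat.sub_self, pow_zero, mul_one]
      congr 1
      apply Finset.sum_congr rfl
      intro i hi
      simp only [Finset.mem_Icc] at hi
      have : k + 1 - i = (k - i) + 1 := by omega
      rw [this, pow_succ]; ring
    have hsum : ∑ i ∈ Icc 1 (k + 1), x i = (∑ i ∈ Icc 1 k, x i) + x (k + 1) :=
      Finset.sum_Icc_succ_top (by omega : 1 ≤ k + 1) _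
    rcases Nat.le_one_iff_eq_zero_or_eq_one.mp (hx (k + 1)) with h | h <;>
      rw [hn, hrhs, hsum, h]
    · constructor
      · simp only [add_zero]
        rw [sdig_two_mul]; exact ih.1
      · simp only [add_zero, zero_mul]
        rw [F_two_mul, ih.2]
    · constructor
      · rw [sdig_two_mul_add_one, ih.1]
      · rw [F_two_mul_add_one, ih.2, ih.1]
        ring

/-- Self-similar decomposition formula: with `num m = M^{s₂(m)}`, `cum(n-1) = Σ_{m<n} num m`,
and `n = Σ_{i=1}^k x_i 2^{k-i}`,
`cum(n-1) = Σ_{i=1}^k x_i · num(Σ_{j<i} x_j 2^{k-j}) · cum(2^{k-i}-1)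
          = Σ_{i=1}^k x_i · M^{Σ_{j<i} x_j} · (M+1)^{k-i}`. -/
theorem stmt11 (M : ℕ) (hM : 2 ≤ M) (k : ℕ) (x : ℕ → ℕ) (hx : ∀ i, x i ≤ 1) :
    (∑ m ∈ Finset.range (∑ i ∈ Finset.Icc 1 k, x i * 2 ^ (k - i)),
        M ^ (Nat.digits 2 m).sum) =
      (∑ i ∈ Finset.Icc 1 k,
        x i * M ^ (Nat.digits 2 (∑ j ∈ Finset.Icc 1 (i - 1), x j * 2 ^ (k - j))).sum *
          (∑ m ∈ Finset.range (2 ^ (k - i)), M ^ (Nat.digits 2 m).sum)) ∧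
    (∑ m ∈ Finset.range (∑ i ∈ Finset.Icc 1 k, x i * 2 ^ (k - i)),
        M ^ (Nat.digits 2 m).sum) =
      ∑ i ∈ Finset.Icc 1 k,
        x i * M ^ (∑ j ∈ Finset.Icc 1 (i - 1), x j) * (M + 1) ^ (k - i) := by
  have h2 : (∑ m ∈ Finset.range (∑ i ∈ Finset.Icc 1 k, x i * 2 ^ (k - i)),
      M ^ (Nat.digits 2 m).sum) =
      ∑ i ∈ Finset.Icc 1 k,
        x i * M ^ (∑ j ∈ Finset.Icc 1 (i - 1), x j) * (M + 1) ^ (k - i) :=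
    (main_lem M x hx k).2
  refine ⟨?_, h2⟩
  rw [h2]
  apply Finset.sum_congr rfl
  intro i hi
  simp only [Finset.mem_Icc] at hi
  have hpre : ∑ j ∈ Icc 1 (i - 1), x j * 2 ^ (k - j)
      = (∑ j ∈ Icc 1 (i - 1), x j * 2 ^ (i - 1 - j)) * 2 ^ (k - i + 1) := by
    rw [Finset.sum_mul]
    apply Finset.sum_congr rfl
    intro j hj
    simp only [Finset.mem_Icc] at hj
    rw [mul_assoc, ← pow_add]
    congr 2
    omega
  have hd : (Nat.digits 2 (∑ j ∈ Finset.Icc 1 (i - 1), x j * 2 ^ (k - j))).sum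
      = ∑ j ∈ Icc 1 (i - 1), x j := by
    show sdig _ = _
    rw [hpre, sdig_mul_pow]
    exact (main_lem M x hx (i - 1)).1
  have hF : (∑ m ∈ Finset.range (2 ^ (k - i)), M ^ (Nat.digits 2 m).sum) = (M + 1) ^ (k - i) :=
    F_pow M (k - i)
  rw [hd, hF]
end

section
/- Let M ≥ 2 be an integer, num(n) = M^(s₂(n)), cum(n) = Σ_{m=0}^n num(m), and define f_k(x) = cum((Σ_{i=1}^k x_i 2^{k−i}) − 1)/cum(2^k − 1) for x = Σ_{i=1}^∞ x_i/2^i with binary digits x_i. Then for each such x the limit f(x) = lim_{k→∞} f_k(x) exists and equals Σ_{i=1}^∞ x_i · M^(Σ_{j=1}^{i−1} x_j) · (M+1)^(−i). -/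
namespace Stmt12Aux

def s (m : ℕ) : ℕ := (Nat.digits 2 m).sum

lemma s_two_mul (q : ℕ) : s (2 * q) = s q := by
  rcases Nat.eq_zero_or_pos q with h | h
  · simp [h, s]
  · unfold s
    rw [Nat.digits_def' (by norm_num : (1:ℕ) < 2) (by positivity)]
    simp [Nat.mul_div_cancel_left, Nat.mul_mod_right]

lemma s_two_mul_add_one (q : ℕ) : s (2 * q + 1) = s q + 1 := by
  unfold s
  rw [Nat.digits_def' (by norm_num : (1:ℕ) < 2) (by positivity)]
  have h1 : (2 * q + 1) % 2 = 1 := by omega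
  have h2 : (2 * q + 1) / 2 = q := by omega
  rw [h1, h2]
  simp [Nat.add_comm]

lemma sum_double (M N : ℕ) :
    ∑ m ∈ Finset.range (2 * N), M ^ s m = (M + 1) * ∑ m ∈ Finset.range N, M ^ s m := by
  induction N with
  | zero => simp
  | succ n ih =>
    have h : 2 * (n + 1) = (2 * n + 1) + 1 := by ring
    rw [h, Finset.sum_range_succ, Finset.sum_range_succ, ih, Finset.sum_range_succ,
      s_two_mul, s_two_mul_add_one]
    ring

lemma sum_double_add (M N b : ℕ) (hb : b ≤ 1) :
    ∑ m ∈ Finset.range (2 * N + b), M ^ s m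
      = (M + 1) * (∑ m ∈ Finset.range N, M ^ s m) + b * M ^ s N := by
  interval_cases b
  · simpa using sum_double M N
  · rw [Finset.sum_range_succ, sum_double, s_two_mul]; ring

def Nk (x : ℕ → ℕ) (k : ℕ) : ℕ := ∑ i ∈ Finset.Icc 1 k, x i * 2 ^ (k - i)

lemma Nk_succ (x : ℕ → ℕ) (k : ℕ) : Nk x (k + 1) = 2 * Nk x k + x (k + 1) := by
  unfold Nk
  rw [Finset.sum_Icc_succ_top (by omega : 1 ≤ k + 1)]
  have : ∑ i ∈ Finset.Icc 1 k, x i * 2 ^ (k + 1 - i)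
      = 2 * ∑ i ∈ Finset.Icc 1 k, x i * 2 ^ (k - i) := by
    rw [Finset.mul_sum]
    apply Finset.sum_congr rfl
    intro i hi
    rw [Finset.mem_Icc] at hi
    have : k + 1 - i = (k - i) + 1 := by omega
    rw [this, pow_succ]; ring
  rw [this]
  simp

lemma s_Nk (x : ℕ → ℕ) (hx : ∀ i, x i ≤ 1) (k : ℕ) :
    s (Nk x k) = ∑ i ∈ Finset.Icc 1 k, x i := by
  induction k with
  | zero => simp [Nk, s]
  | succ k ih =>
    rw [Nk_succ, Finset.sum_Icc_succ_top (by omega : 1 ≤ k + 1), ← ih]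
    rcases Nat.le_one_iff_eq_zero_or_eq_one.mp (hx (k + 1)) with h | h
    · rw [h]; simpa using s_two_mul (Nk x k)
    · rw [h]; exact s_two_mul_add_one (Nk x k)

lemma key (M : ℕ) (x : ℕ → ℕ) (hx : ∀ i, x i ≤ 1) (k : ℕ) :
    ∑ m ∈ Finset.range (Nk x k), M ^ s m
      = ∑ i ∈ Finset.range k,
          x (i + 1) * M ^ (∑ j ∈ Finset.range i, x (j + 1)) * (M + 1) ^ (k - (i + 1)) := by
  induction k with
  | zero => simp [Nk]
  | succ k ih =>
    rw [Nk_succ, sum_double_add M _ _ (hx _), ih, Finset.sum_range_succ]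
    have hs : s (Nk x k) = ∑ j ∈ Finset.range k, x (j + 1) := by
      rw [s_Nk x hx k, ← Finset.Ico_add_one_right_eq_Icc, Finset.sum_Ico_eq_sum_range]
      simp [Nat.add_comm]
    rw [hs, Finset.mul_sum]
    have hterm : ∀ i ∈ Finset.range k,
        (M + 1) * (x (i + 1) * M ^ (∑ j ∈ Finset.range i, x (j + 1)) * (M + 1) ^ (k - (i + 1)))
        = x (i + 1) * M ^ (∑ j ∈ Finset.range i, x (j + 1)) * (M + 1) ^ (k + 1 - (i + 1)) := by
      intro i hi
      rw [Finset.mem_range] at hi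
      have : k + 1 - (i + 1) = (k - (i + 1)) + 1 := by omega
      rw [this, pow_succ]; ring
    rw [Finset.sum_congr rfl hterm]
    simp [Nat.mul_comm]

lemma denom (M k : ℕ) : ∑ m ∈ Finset.range (2 ^ k), M ^ s m = (M + 1) ^ k := by
  induction k with
  | zero => simp [s]
  | succ k ih =>
    have : (2 : ℕ) ^ (k + 1) = 2 * 2 ^ k := by ring
    rw [this, sum_double, ih, pow_succ]; ring

end Stmt12Aux

open Stmt12Aux in
/-- The normalized cumulative counts `f_k(x) = cum((Σ_{i≤k} x_i 2^{k-i}) - 1)/cum(2^k - 1)`,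
where `num m = M^{s₂(m)}` and `cum(n-1) = Σ_{m<n} num m`, converge as `k → ∞` to
`Σ_{i≥1} x_i M^{Σ_{j<i} x_j} (M+1)^{-i}`. -/
theorem stmt12 (M : ℕ) (hM : 2 ≤ M) (x : ℕ → ℕ) (hx : ∀ i, x i ≤ 1) :
    Filter.Tendsto (fun k : ℕ =>
        ((∑ m ∈ Finset.range (∑ i ∈ Finset.Icc 1 k, x i * 2 ^ (k - i)),
            M ^ (Nat.digits 2 m).sum : ℕ) : ℝ) /
        ((∑ m ∈ Finset.range (2 ^ k), M ^ (Nat.digits 2 m).sum : ℕ) : ℝ))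
      Filter.atTop
      (nhds (∑' i : ℕ, (x (i + 1) : ℝ) * (M : ℝ) ^ (∑ j ∈ Finset.range i, x (j + 1)) *
        ((M : ℝ) + 1)⁻¹ ^ (i + 1))) := by
  set a : ℕ → ℝ := fun i => (x (i + 1) : ℝ) * (M : ℝ) ^ (∑ j ∈ Finset.range i, x (j + 1)) *
    ((M : ℝ) + 1)⁻¹ ^ (i + 1) with ha
  have hM1 : (0 : ℝ) < (M : ℝ) + 1 := by positivity
  -- summability
  have hb : Summable (fun i : ℕ => ((M : ℝ) + 1)⁻¹ * ((M : ℝ) * ((M : ℝ) + 1)⁻¹) ^ i) := by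
    apply Summable.mul_left
    apply summable_geometric_of_lt_one (by positivity)
    rw [inv_eq_one_div, mul_one_div, div_lt_one hM1]
    linarith
  have hsummable : Summable a := by
    apply Summable.of_nonneg_of_le (fun i => by positivity) _ hb
    intro i
    have h1 : (x (i + 1) : ℝ) ≤ 1 := by exact_mod_cast hx (i + 1)
    have h2 : (M : ℝ) ^ (∑ j ∈ Finset.range i, x (j + 1)) ≤ (M : ℝ) ^ i := by
      apply pow_le_pow_right₀ (by exact_mod_cast (by omega : 1 ≤ M))
      calc ∑ j ∈ Finset.range i, x (j + 1) ≤ ∑ j ∈ Finset.range i, 1 :=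
            Finset.sum_le_sum fun j _ => hx (j + 1)
        _ = i := by simp
    have h3 : ((M : ℝ) + 1)⁻¹ * ((M : ℝ) * ((M : ℝ) + 1)⁻¹) ^ i
        = (M : ℝ) ^ i * ((M : ℝ) + 1)⁻¹ ^ (i + 1) := by
      rw [mul_pow, pow_succ]; ring
    rw [ha, h3]
    have hx1 : (0 : ℝ) ≤ (x (i + 1) : ℝ) := by positivity
    calc (x (i + 1) : ℝ) * (M : ℝ) ^ (∑ j ∈ Finset.range i, x (j + 1)) *
          ((M : ℝ) + 1)⁻¹ ^ (i + 1)
        ≤ 1 * (M : ℝ) ^ i * ((M : ℝ) + 1)⁻¹ ^ (i + 1) := by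
          apply mul_le_mul_of_nonneg_right _ (by positivity)
          exact mul_le_mul h1 h2 (by positivity) (by norm_num)
      _ = (M : ℝ) ^ i * ((M : ℝ) + 1)⁻¹ ^ (i + 1) := by ring
  have htend := hsummable.hasSum.tendsto_sum_nat
  apply htend.congr
  intro k
  -- partial sum equals the ratio
  have hnum := key M x hx k
  have hden := denom M k
  show (∑ i ∈ Finset.range k, a i) = _
  rw [show (∑ m ∈ Finset.range (∑ i ∈ Finset.Icc 1 k, x i * 2 ^ (k - i)),
        M ^ (Nat.digits 2 m).sum : ℕ) = ∑ m ∈ Finset.range (Nk x k), M ^ s m from rfl,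
    show (∑ m ∈ Finset.range (2 ^ k), M ^ (Nat.digits 2 m).sum : ℕ)
        = ∑ m ∈ Finset.range (2 ^ k), M ^ s m from rfl, hnum, hden]
  push_cast
  rw [Finset.sum_div]
  apply Finset.sum_congr rfl
  intro i hi
  rw [Finset.mem_range] at hi
  have hik : i + 1 ≤ k := hi
  have hpow : ((M : ℝ) + 1) ^ (k - (i + 1)) / ((M : ℝ) + 1) ^ k
      = ((M : ℝ) + 1)⁻¹ ^ (i + 1) := by
    have hsplit : ((M : ℝ) + 1) ^ k = ((M : ℝ) + 1) ^ (k - (i + 1)) * ((M : ℝ) + 1) ^ (i + 1) := by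
      rw [← pow_add]; congr 1; omega
    rw [hsplit, inv_pow, div_mul_cancel_left₀ (by positivity : ((M:ℝ)+1) ^ (k - (i+1)) ≠ 0)]
  rw [ha]
  calc (x (i + 1) : ℝ) * (M : ℝ) ^ (∑ j ∈ Finset.range i, x (j + 1)) *
        ((M : ℝ) + 1)⁻¹ ^ (i + 1)
      = (x (i + 1) : ℝ) * (M : ℝ) ^ (∑ j ∈ Finset.range i, x (j + 1)) *
        (((M : ℝ) + 1) ^ (k - (i + 1)) / ((M : ℝ) + 1) ^ k) := by rw [hpow]
    _ = _ := by ring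
end
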